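/- arXiv:1912.07688 — 4 statements merged into one kernel-verified Lean document; each statement's English description precedes it below -/
import Mathlib

section
/- Fix p_gen, p_swap ∈ (0,1], and let (f_n) and (f_n^up) be the waiting-time distributions of the SWAP-ONLY protocol and its dominating sequential variant, with cumulative sums F_n(t) = Σ_{s=0}^{t} f_n(s) and F_n^up(t) = Σ_{s=0}^{t} f_n^up(s). Then for every n ≥ 0 and every t ∈ ℕ, F_n^up(t) ≤ F_n(t); that is, T_n^upper stochastically dominates T_n. -/
noncomputable section

namespace RepeaterChain

/-- Convolution of two functions on `ℕ`: `(a*b)(t) = Σ_{s=0}^{t} a(s)·b(t−s)`. -/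
def conv (a b : ℕ → ℝ) : ℕ → ℝ := fun t => ∑ s ∈ Finset.range (t + 1), a s * b (t - s)

/-- `convPow m k` is the `k`-fold convolution `m^{*k}` of `m` with itself
(`convPow m 0` is the convolution identity, the delta at `0`, and `convPow m 1 = m`). -/
def convPow (m : ℕ → ℝ) : ℕ → ℕ → ℝ
  | 0 => fun t => if t = 0 then 1 else 0
  | k + 1 => conv (convPow m k) m

/-- Cumulative sums: `F(t) = Σ_{s=0}^{t} f(s)`. -/
def cum (f : ℕ → ℝ) : ℕ → ℝ := fun t => ∑ s ∈ Finset.range (t + 1), f s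

/-- The geometric distribution with parameter `p`, supported on `{1, 2, …}`:
`f(0) = 0` and `f(t) = p·(1−p)^{t−1}` for `t ≥ 1`. -/
def geomPMF (p : ℝ) : ℕ → ℝ := fun t => if t = 0 then 0 else p * (1 - p) ^ (t - 1)

/-- Distribution of the maximum of two i.i.d. copies of a variable with pmf `f`:
`m(0) = 0` and `m(t) = F(t)² − F(t−1)²` for `t ≥ 1`. -/
def maxPMF (f : ℕ → ℝ) : ℕ → ℝ :=
  fun t => if t = 0 then 0 else cum f t ^ 2 - cum f (t - 1) ^ 2

/-- Distribution of the geometric compound sum with parameter `p` of summands with pmf `m`: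
`t ↦ Σ_{k=1}^{∞} p·(1−p)^{k−1}·m^{*k}(t)` (the sum over `k ≥ 1` written via `k ↦ k + 1`). -/
def geomCompound (p : ℝ) (m : ℕ → ℝ) : ℕ → ℝ :=
  fun t => ∑' k : ℕ, p * (1 - p) ^ k * convPow m (k + 1) t

/-- The waiting-time distribution `f_n` of `T_n` for the SWAP-ONLY protocol on a `2^n`-segment
repeater chain: `f_0` is geometric with parameter `p_gen`, and `f_{n+1}` is the geometric compound
sum (parameter `p_swap`) of copies of the maximum of two i.i.d. copies of `T_n`. -/
def fSwap (pgen pswap : ℝ) : ℕ → ℕ → ℝ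
  | 0 => geomPMF pgen
  | n + 1 => geomCompound pswap (maxPMF (fSwap pgen pswap n))

/-- The waiting-time distribution `f_n^up` of the dominating sequential variant `T_n^upper`,
in which the two links at every swap level are produced sequentially rather than in parallel:
`f_0^up = f_0`, and `f_{n+1}^up` is the geometric compound sum (parameter `p_swap`) of copies of
the sum of two i.i.d. copies of `T_n^upper`. -/
def fUp (pgen pswap : ℝ) : ℕ → ℕ → ℝ
  | 0 => geomPMF pgen
  | n + 1 => geomCompound pswap (conv (fUp pgen pswap n) (fUp pgen pswap n))

end RepeaterChain

open RepeaterChain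

namespace RepeaterChain.Aux


lemma cum_succ (f : ℕ → ℝ) (t : ℕ) : cum f (t + 1) = cum f t + f (t + 1) :=
  Finset.sum_range_succ f (t + 1)

lemma cum_zero (f : ℕ → ℝ) : cum f 0 = f 0 := by simp [cum]

lemma cum_nonneg {f : ℕ → ℝ} (hf : ∀ t, 0 ≤ f t) (t : ℕ) : 0 ≤ cum f t :=
  Finset.sum_nonneg fun s _ => hf s

lemma cum_mono {f : ℕ → ℝ} (hf : ∀ t, 0 ≤ f t) {s t : ℕ} (h : s ≤ t) :
    cum f s ≤ cum f t :=
  Finset.sum_le_sum_of_subset_of_nonneg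
    (Finset.range_subset_range.mpr (by omega)) (fun i _ _ => hf i)

lemma le_cum {f : ℕ → ℝ} (hf : ∀ t, 0 ≤ f t) (t : ℕ) : f t ≤ cum f t := by
  have := Finset.single_le_sum (f := f) (fun i _ => hf i)
    (Finset.self_mem_range_succ t)
  simpa [cum] using this

lemma conv_nonneg {a b : ℕ → ℝ} (ha : ∀ t, 0 ≤ a t) (hb : ∀ t, 0 ≤ b t) (t : ℕ) :
    0 ≤ conv a b t :=
  Finset.sum_nonneg fun s _ => mul_nonneg (ha s) (hb _)

lemma conv_comm (a b : ℕ → ℝ) : conv a b = conv b a := by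
  funext t
  unfold conv
  rw [← Finset.sum_range_reflect]
  refine Finset.sum_congr rfl fun s hs => ?_
  rw [Finset.mem_range] at hs
  have h1 : t + 1 - 1 - s = t - s := by omega
  have h2 : t - (t - s) = s := by omega
  rw [h1, h2, mul_comm]

lemma cum_conv (a b : ℕ → ℝ) (t : ℕ) :
    cum (conv a b) t = ∑ s ∈ Finset.range (t + 1), a s * cum b (t - s) := by
  induction t with
  | zero => simp [cum, conv]
  | succ t ih =>
    rw [cum_succ, ih, Finset.sum_range_succ (fun s => a s * cum b (t + 1 - s)) (t + 1)]
    have h2 : ∀ s ∈ Finset.range (t + 1),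
        a s * cum b (t + 1 - s) = a s * cum b (t - s) + a s * b (t + 1 - s) := by
      intro s hs
      rw [Finset.mem_range] at hs
      have h3 : t + 1 - s = (t - s) + 1 := by omega
      rw [h3, cum_succ, mul_add]
    rw [Finset.sum_congr rfl h2, Finset.sum_add_distrib]
    have h4 : conv a b (t + 1)
        = ∑ s ∈ Finset.range (t + 1), a s * b (t + 1 - s) + a (t + 1) * b 0 := by
      unfold conv
      rw [Finset.sum_range_succ]
      simp
    rw [h4]
    simp [cum_zero]
    ring

lemma cum_conv_le_one {a b : ℕ → ℝ} (ha : ∀ t, 0 ≤ a t) (hb : ∀ t, 0 ≤ b t)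
    (hA : ∀ t, cum a t ≤ 1) (hB : ∀ t, cum b t ≤ 1) (t : ℕ) :
    cum (conv a b) t ≤ 1 := by
  rw [cum_conv]
  calc ∑ s ∈ Finset.range (t + 1), a s * cum b (t - s)
      ≤ ∑ s ∈ Finset.range (t + 1), a s * 1 :=
        Finset.sum_le_sum fun s _ => mul_le_mul_of_nonneg_left (hB _) (ha s)
    _ = cum a t := by simp [cum]
    _ ≤ 1 := hA t

lemma cum_conv_mono {a b c d : ℕ → ℝ} (ha : ∀ t, 0 ≤ a t) (hd : ∀ t, 0 ≤ d t)
    (hac : ∀ t, cum a t ≤ cum c t) (hbd : ∀ t, cum b t ≤ cum d t) (t : ℕ) :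
    cum (conv a b) t ≤ cum (conv c d) t := by
  have step1 : cum (conv a b) t ≤ cum (conv a d) t := by
    rw [cum_conv, cum_conv]
    exact Finset.sum_le_sum fun s _ => mul_le_mul_of_nonneg_left (hbd _) (ha s)
  have step2 : cum (conv a d) t ≤ cum (conv c d) t := by
    rw [conv_comm a d, conv_comm c d, cum_conv, cum_conv]
    exact Finset.sum_le_sum fun s _ => mul_le_mul_of_nonneg_left (hac _) (hd s)
  linarith

lemma convPow_nonneg {m : ℕ → ℝ} (hm : ∀ t, 0 ≤ m t) : ∀ k t, 0 ≤ convPow m k t := by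
  intro k
  induction k with
  | zero => intro t; simp only [convPow]; positivity
  | succ k ih => exact conv_nonneg ih hm

lemma cum_convPow_le_one {m : ℕ → ℝ} (hm : ∀ t, 0 ≤ m t) (hM : ∀ t, cum m t ≤ 1) :
    ∀ k t, cum (convPow m k) t ≤ 1 := by
  intro k
  induction k with
  | zero =>
      intro t
      have : cum (convPow m 0) t = 1 := by
        simp only [convPow, cum]
        rw [Finset.sum_ite_eq' (Finset.range (t+1)) 0 (fun _ => (1:ℝ))]
        simp
      rw [this]
  | succ k ih => exact cum_conv_le_one (convPow_nonneg hm k) hm ih hM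

lemma cum_convPow_mono {a b : ℕ → ℝ} (ha : ∀ t, 0 ≤ a t) (hb : ∀ t, 0 ≤ b t)
    (hab : ∀ t, cum a t ≤ cum b t) : ∀ k t, cum (convPow a k) t ≤ cum (convPow b k) t := by
  intro k
  induction k with
  | zero => intro t; simp only [convPow]; exact le_refl _
  | succ k ih => exact cum_conv_mono (convPow_nonneg ha k) hb ih hab



lemma geomPMF_nonneg {p : ℝ} (hp0 : 0 < p) (hp1 : p ≤ 1) (t : ℕ) : 0 ≤ geomPMF p t := by
  have h1p : (0:ℝ) ≤ 1 - p := by linarith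
  unfold geomPMF
  split
  · exact le_refl _
  · exact mul_nonneg hp0.le (pow_nonneg h1p _)

lemma cum_geomPMF {p : ℝ} (t : ℕ) : cum (geomPMF p) t = 1 - (1 - p) ^ t := by
  induction t with
  | zero => simp [cum_zero, geomPMF]
  | succ t ih =>
      rw [cum_succ, ih]
      simp only [geomPMF, Nat.add_sub_cancel, if_neg (Nat.succ_ne_zero t)]
      rw [pow_succ]
      ring

lemma cum_geomPMF_le_one {p : ℝ} (hp0 : 0 < p) (hp1 : p ≤ 1) (t : ℕ) :
    cum (geomPMF p) t ≤ 1 := by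
  rw [cum_geomPMF]
  have h1p : (0:ℝ) ≤ 1 - p := by linarith
  have : (0:ℝ) ≤ (1 - p) ^ t := pow_nonneg h1p t
  linarith

-- maxPMF facts
lemma cum_maxPMF {f : ℕ → ℝ} (hf0 : f 0 = 0) (t : ℕ) :
    cum (maxPMF f) t = cum f t ^ 2 := by
  induction t with
  | zero => simp [cum_zero, maxPMF, hf0]
  | succ t ih =>
      rw [cum_succ, ih]
      simp only [maxPMF, Nat.add_sub_cancel, if_neg (Nat.succ_ne_zero t)]
      ring

lemma maxPMF_nonneg {f : ℕ → ℝ} (hf : ∀ t, 0 ≤ f t) (t : ℕ) : 0 ≤ maxPMF f t := by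
  unfold maxPMF
  split
  · exact le_refl _
  · have h1 : cum f (t - 1) ≤ cum f t := cum_mono hf (by omega)
    have h2 : 0 ≤ cum f (t - 1) := cum_nonneg hf _
    nlinarith

-- summability for geomCompound
lemma summable_term {p : ℝ} {m : ℕ → ℝ} (hp0 : 0 < p) (hp1 : p ≤ 1)
    (hm : ∀ t, 0 ≤ m t) (hM : ∀ t, cum m t ≤ 1) (t : ℕ) :
    Summable (fun k : ℕ => p * (1 - p) ^ k * convPow m (k + 1) t) := by
  have hgeo : Summable (fun k : ℕ => p * (1 - p) ^ k) :=
    (summable_geometric_of_lt_one (by linarith) (by linarith)).mul_left p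
  have h1p : (0:ℝ) ≤ 1 - p := by linarith
  refine Summable.of_nonneg_of_le (fun k => ?_) (fun k => ?_) hgeo
  · exact mul_nonneg (mul_nonneg hp0.le (pow_nonneg h1p k)) (convPow_nonneg hm (k + 1) t)
  · have h1 : convPow m (k + 1) t ≤ 1 :=
      le_trans (le_cum (convPow_nonneg hm (k + 1)) t) (cum_convPow_le_one hm hM (k + 1) t)
    have h2 : (0:ℝ) ≤ p * (1 - p) ^ k := mul_nonneg hp0.le (pow_nonneg h1p k)
    nlinarith

lemma summable_cum_term {p : ℝ} {m : ℕ → ℝ} (hp0 : 0 < p) (hp1 : p ≤ 1)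
    (hm : ∀ t, 0 ≤ m t) (hM : ∀ t, cum m t ≤ 1) (t : ℕ) :
    Summable (fun k : ℕ => p * (1 - p) ^ k * cum (convPow m (k + 1)) t) := by
  have hgeo : Summable (fun k : ℕ => p * (1 - p) ^ k) :=
    (summable_geometric_of_lt_one (by linarith) (by linarith)).mul_left p
  have h1p : (0:ℝ) ≤ 1 - p := by linarith
  refine Summable.of_nonneg_of_le (fun k => ?_) (fun k => ?_) hgeo
  · exact mul_nonneg (mul_nonneg hp0.le (pow_nonneg h1p k)) (cum_nonneg (convPow_nonneg hm (k + 1)) t)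
  · have h1 := cum_convPow_le_one hm hM (k + 1) t
    have h2 : (0:ℝ) ≤ p * (1 - p) ^ k := mul_nonneg hp0.le (pow_nonneg h1p k)
    nlinarith

lemma cum_geomCompound {p : ℝ} {m : ℕ → ℝ} (hp0 : 0 < p) (hp1 : p ≤ 1)
    (hm : ∀ t, 0 ≤ m t) (hM : ∀ t, cum m t ≤ 1) (t : ℕ) :
    cum (geomCompound p m) t = ∑' k : ℕ, p * (1 - p) ^ k * cum (convPow m (k + 1)) t := by
  unfold cum geomCompound
  rw [← Summable.tsum_finsetSum (fun s _ => summable_term hp0 hp1 hm hM s)]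
  refine tsum_congr fun k => ?_
  rw [Finset.mul_sum]

lemma tsum_geom_eq_one {p : ℝ} (hp0 : 0 < p) (hp1 : p ≤ 1) :
    ∑' k : ℕ, p * (1 - p) ^ k = 1 := by
  rw [tsum_mul_left, tsum_geometric_of_lt_one (by linarith) (by linarith)]
  rw [sub_sub_cancel, mul_inv_cancel₀ hp0.ne']

lemma geomCompound_nonneg {p : ℝ} {m : ℕ → ℝ} (hp0 : 0 < p) (hp1 : p ≤ 1)
    (hm : ∀ t, 0 ≤ m t) (t : ℕ) : 0 ≤ geomCompound p m t := by
  have h1p : (0:ℝ) ≤ 1 - p := by linarith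
  exact tsum_nonneg fun k =>
    mul_nonneg (mul_nonneg hp0.le (pow_nonneg h1p k)) (convPow_nonneg hm (k + 1) t)

lemma cum_geomCompound_le_one {p : ℝ} {m : ℕ → ℝ} (hp0 : 0 < p) (hp1 : p ≤ 1)
    (hm : ∀ t, 0 ≤ m t) (hM : ∀ t, cum m t ≤ 1) (t : ℕ) :
    cum (geomCompound p m) t ≤ 1 := by
  have h1p : (0:ℝ) ≤ 1 - p := by linarith
  rw [cum_geomCompound hp0 hp1 hm hM]
  refine le_trans (Summable.tsum_le_tsum (fun k => ?_) (summable_cum_term hp0 hp1 hm hM t)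
    ((summable_geometric_of_lt_one (by linarith) (by linarith)).mul_left p))
    (le_of_eq (tsum_geom_eq_one hp0 hp1))
  have h1 := cum_convPow_le_one hm hM (k + 1) t
  have h2 : (0:ℝ) ≤ p * (1 - p) ^ k := mul_nonneg hp0.le (pow_nonneg h1p k)
  nlinarith

lemma geomCompound_zero {p : ℝ} {m : ℕ → ℝ} (hm0 : m 0 = 0) : geomCompound p m 0 = 0 := by
  unfold geomCompound
  have h : ∀ k : ℕ, p * (1 - p) ^ k * convPow m (k + 1) 0 = 0 := by
    intro k
    have : convPow m (k + 1) 0 = 0 := by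
      show conv (convPow m k) m 0 = 0
      simp [conv, hm0]
    rw [this, mul_zero]
  simp [h]

lemma cum_geomCompound_mono {p : ℝ} {a b : ℕ → ℝ} (hp0 : 0 < p) (hp1 : p ≤ 1)
    (ha : ∀ t, 0 ≤ a t) (hA : ∀ t, cum a t ≤ 1)
    (hb : ∀ t, 0 ≤ b t) (hB : ∀ t, cum b t ≤ 1)
    (hab : ∀ t, cum a t ≤ cum b t) (t : ℕ) :
    cum (geomCompound p a) t ≤ cum (geomCompound p b) t := by
  rw [cum_geomCompound hp0 hp1 ha hA, cum_geomCompound hp0 hp1 hb hB]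
  refine Summable.tsum_le_tsum (fun k => ?_) (summable_cum_term hp0 hp1 ha hA t)
    (summable_cum_term hp0 hp1 hb hB t)
  have h1p : (0:ℝ) ≤ 1 - p := by linarith
  have h1 := cum_convPow_mono ha hb hab (k + 1) t
  have h2 : (0:ℝ) ≤ p * (1 - p) ^ k := mul_nonneg hp0.le (pow_nonneg h1p k)
  nlinarith


lemma cum_conv_self_le_sq {g : ℕ → ℝ} (hg : ∀ t, 0 ≤ g t) (t : ℕ) :
    cum (conv g g) t ≤ cum g t ^ 2 := by
  rw [cum_conv]
  calc ∑ s ∈ Finset.range (t + 1), g s * cum g (t - s)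
      ≤ ∑ s ∈ Finset.range (t + 1), g s * cum g t :=
        Finset.sum_le_sum fun s _ =>
          mul_le_mul_of_nonneg_left (cum_mono hg (by omega)) (hg s)
    _ = cum g t * cum g t := by rw [← Finset.sum_mul]; rfl
    _ = cum g t ^ 2 := (sq (cum g t)).symm


end RepeaterChain.Aux

open RepeaterChain.Aux


/-- `T_n^upper` stochastically dominates `T_n`: for all `n` and `t`,
`F_n^up(t) ≤ F_n(t)`, where `F_n`, `F_n^up` are the cumulative sums of the SWAP-ONLY
waiting-time distribution `f_n` and of its dominating sequential variant `f_n^up`. -/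
theorem fUp_stochDom_fSwap (pgen pswap : ℝ)
    (hgen0 : 0 < pgen) (hgen1 : pgen ≤ 1) (hswap0 : 0 < pswap) (hswap1 : pswap ≤ 1) :
    ∀ n t : ℕ, cum (fUp pgen pswap n) t ≤ cum (fSwap pgen pswap n) t := by
  suffices key : ∀ n, (∀ t, 0 ≤ fSwap pgen pswap n t) ∧ (∀ t, cum (fSwap pgen pswap n) t ≤ 1)
      ∧ fSwap pgen pswap n 0 = 0
      ∧ (∀ t, 0 ≤ fUp pgen pswap n t) ∧ (∀ t, cum (fUp pgen pswap n) t ≤ 1)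
      ∧ (∀ t, cum (fUp pgen pswap n) t ≤ cum (fSwap pgen pswap n) t) by
    exact fun n => (key n).2.2.2.2.2
  intro n
  induction n with
  | zero =>
      refine ⟨geomPMF_nonneg hgen0 hgen1, cum_geomPMF_le_one hgen0 hgen1, by simp [fSwap, geomPMF],
        geomPMF_nonneg hgen0 hgen1, cum_geomPMF_le_one hgen0 hgen1, fun t => le_refl _⟩
  | succ n ih =>
      obtain ⟨hf, hF, hf0, hg, hG, hGF⟩ := ih
      set f := fSwap pgen pswap n
      set g := fUp pgen pswap n
      have hm : ∀ t, 0 ≤ maxPMF f t := maxPMF_nonneg hf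
      have hM : ∀ t, cum (maxPMF f) t ≤ 1 := by
        intro t
        rw [cum_maxPMF hf0]
        have h0 := cum_nonneg hf t
        nlinarith [hF t]
      have hmu : ∀ t, 0 ≤ conv g g t := conv_nonneg hg hg
      have hMu : ∀ t, cum (conv g g) t ≤ 1 := cum_conv_le_one hg hg hG hG
      have hcomp : ∀ t, cum (conv g g) t ≤ cum (maxPMF f) t := by
        intro t
        rw [cum_maxPMF hf0]
        refine le_trans (cum_conv_self_le_sq hg t) ?_
        have h0 := cum_nonneg hg t
        nlinarith [hGF t]
      have hswapstep : fSwap pgen pswap (n + 1) = geomCompound pswap (maxPMF f) := rfl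
      have hupstep : fUp pgen pswap (n + 1) = geomCompound pswap (conv g g) := rfl
      refine ⟨?_, ?_, ?_, ?_, ?_, ?_⟩
      · rw [hswapstep]; exact geomCompound_nonneg hswap0 hswap1 hm
      · rw [hswapstep]; exact cum_geomCompound_le_one hswap0 hswap1 hm hM
      · rw [hswapstep]; exact geomCompound_zero (by simp [maxPMF])
      · rw [hupstep]; exact geomCompound_nonneg hswap0 hswap1 hmu
      · rw [hupstep]; exact cum_geomCompound_le_one hswap0 hswap1 hmu hMu
      · rw [hswapstep, hupstep]
        exact cum_geomCompound_mono hswap0 hswap1 hmu hMu hm hM hcomp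
end
end

section
/- Fix p_gen, p_swap ∈ (0,1], and let (f_n^up) be the waiting-time distributions of the sequential variant T_n^upper, with cumulative sums F_n^up(t) = Σ_{s=0}^{t} f_n^up(s). Then for every n ≥ 0, the mean of T_n^upper satisfies Σ_{t=1}^{∞} (1 − F_n^up(t−1)) = (2/p_swap)^n · (1/p_gen). -/
noncomputable section

open RepeaterChain

open scoped ENNReal

namespace RepeaterAux

/-! ### `ℝ≥0∞`-valued mirrors of the definitions -/

def econv (a b : ℕ → ℝ≥0∞) : ℕ → ℝ≥0∞ := fun t => ∑ s ∈ Finset.range (t + 1), a s * b (t - s)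

def econvPow (m : ℕ → ℝ≥0∞) : ℕ → ℕ → ℝ≥0∞
  | 0 => fun t => if t = 0 then 1 else 0
  | k + 1 => econv (econvPow m k) m

def egeom (p : ℝ≥0∞) : ℕ → ℝ≥0∞ := fun t => if t = 0 then 0 else p * (1 - p) ^ (t - 1)

def ecomp (p : ℝ≥0∞) (m : ℕ → ℝ≥0∞) : ℕ → ℝ≥0∞ :=
  fun t => ∑' k : ℕ, p * (1 - p) ^ k * econvPow m (k + 1) t

def eUp (q r : ℝ≥0∞) : ℕ → ℕ → ℝ≥0∞
  | 0 => egeom q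
  | n + 1 => ecomp r (econv (eUp q r n) (eUp q r n))

/-! ### Fubini for convolutions -/

lemma tsum_conv_aux (f : ℕ → ℕ → ℝ≥0∞) :
    ∑' t : ℕ, ∑ s ∈ Finset.range (t + 1), f s (t - s) = ∑' s : ℕ, ∑' u : ℕ, f s u := by
  have h1 : ∀ t : ℕ, ∑ s ∈ Finset.range (t + 1), f s (t - s)
      = ∑' s : ℕ, if s ≤ t then f s (t - s) else 0 := by
    intro t
    rw [tsum_eq_sum (s := Finset.range (t + 1))
      (fun b hb => if_neg (by simp only [Finset.mem_range] at hb; omega))]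
    exact Finset.sum_congr rfl fun s hs =>
      (if_pos (by simp only [Finset.mem_range] at hs; omega)).symm
  calc ∑' t : ℕ, ∑ s ∈ Finset.range (t + 1), f s (t - s)
      = ∑' t : ℕ, ∑' s : ℕ, if s ≤ t then f s (t - s) else 0 := tsum_congr h1
    _ = ∑' s : ℕ, ∑' t : ℕ, if s ≤ t then f s (t - s) else 0 := ENNReal.tsum_comm
    _ = ∑' s : ℕ, ∑' u : ℕ, f s u := by
        refine tsum_congr fun s => ?_
        have hinj : Function.Injective (fun u : ℕ => s + u) := fun a b h => by
          have h' : s + a = s + b := h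
          omega
        have hsupp : Function.support (fun t : ℕ => if s ≤ t then f s (t - s) else 0)
            ⊆ Set.range (fun u : ℕ => s + u) := by
          intro t ht
          by_cases h : s ≤ t
          · exact ⟨t - s, show s + (t - s) = t by omega⟩
          · simp only [Function.mem_support, if_neg h] at ht; exact absurd rfl ht
        rw [← hinj.tsum_eq hsupp]
        exact tsum_congr fun u => by simp

lemma tsum_econv (a b : ℕ → ℝ≥0∞) :
    ∑' t, econv a b t = (∑' s, a s) * (∑' u, b u) := by
  unfold econv
  rw [tsum_conv_aux (fun s u => a s * b u)]
  simp only [ENNReal.tsum_mul_left, ENNReal.tsum_mul_right]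

lemma tsum_mul_econv (a b : ℕ → ℝ≥0∞) :
    ∑' t : ℕ, (t : ℝ≥0∞) * econv a b t
      = (∑' t : ℕ, (t : ℝ≥0∞) * a t) * (∑' u, b u)
        + (∑' s, a s) * (∑' t : ℕ, (t : ℝ≥0∞) * b t) := by
  set g : ℕ → ℕ → ℝ≥0∞ :=
    fun s u => (s : ℝ≥0∞) * a s * b u + a s * ((u : ℝ≥0∞) * b u) with hg
  have key : ∀ t : ℕ, (t : ℝ≥0∞) * econv a b t
      = ∑ s ∈ Finset.range (t + 1), g s (t - s) := by
    intro t
    unfold econv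
    rw [Finset.mul_sum]
    refine Finset.sum_congr rfl fun s hs => ?_
    have hst : s ≤ t := by simp only [Finset.mem_range] at hs; omega
    have hcast : (t : ℝ≥0∞) = (s : ℝ≥0∞) + ((t - s : ℕ) : ℝ≥0∞) := by
      rw [← Nat.cast_add]; congr 1; omega
    rw [hcast, hg]; ring
  rw [tsum_congr key, tsum_conv_aux g, hg]
  simp only [ENNReal.tsum_add, ENNReal.tsum_mul_left, ENNReal.tsum_mul_right]

/-! ### Geometric series facts -/

lemma tsum_succ_geometric (x : ℝ≥0∞) :
    ∑' u : ℕ, ((u : ℝ≥0∞) + 1) * x ^ u = ((1 - x)⁻¹) ^ 2 := by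
  have h : ∀ u : ℕ, econv (fun i => x ^ i) (fun i => x ^ i) u = ((u : ℝ≥0∞) + 1) * x ^ u := by
    intro u
    unfold econv
    have hterm : ∀ s ∈ Finset.range (u + 1), x ^ s * x ^ (u - s) = x ^ u := by
      intro s hs
      rw [← pow_add]; congr 1; simp only [Finset.mem_range] at hs; omega
    rw [Finset.sum_congr rfl hterm, Finset.sum_const, Finset.card_range, nsmul_eq_mul]
    push_cast; ring
  calc ∑' u : ℕ, ((u : ℝ≥0∞) + 1) * x ^ u
      = ∑' u, econv (fun i => x ^ i) (fun i => x ^ i) u := (tsum_congr h).symm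
    _ = (∑' i : ℕ, x ^ i) * (∑' i : ℕ, x ^ i) := tsum_econv _ _
    _ = ((1 - x)⁻¹) ^ 2 := by rw [ENNReal.tsum_geometric]; ring

lemma tsum_egeom {p : ℝ≥0∞} (hp0 : p ≠ 0) (hp1 : p ≤ 1) : ∑' t, egeom p t = 1 := by
  have hptop : p ≠ ∞ := ne_top_of_le_ne_top ENNReal.one_ne_top hp1
  have h0 : egeom p 0 = 0 := by simp [egeom]
  have hs : ∀ u : ℕ, egeom p (u + 1) = p * (1 - p) ^ u := fun u => by simp [egeom]
  rw [tsum_eq_zero_add' ENNReal.summable, h0, zero_add, tsum_congr hs,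
    ENNReal.tsum_mul_left, ENNReal.tsum_geometric,
    ENNReal.sub_sub_cancel ENNReal.one_ne_top hp1, ENNReal.mul_inv_cancel hp0 hptop]

lemma tsum_mul_egeom {p : ℝ≥0∞} (hp0 : p ≠ 0) (hp1 : p ≤ 1) :
    ∑' t : ℕ, (t : ℝ≥0∞) * egeom p t = p⁻¹ := by
  have hptop : p ≠ ∞ := ne_top_of_le_ne_top ENNReal.one_ne_top hp1
  have hs : ∀ u : ℕ, ((u + 1 : ℕ) : ℝ≥0∞) * egeom p (u + 1)
      = p * (((u : ℝ≥0∞) + 1) * (1 - p) ^ u) := by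
    intro u
    have : egeom p (u + 1) = p * (1 - p) ^ u := by simp [egeom]
    rw [this]; push_cast; ring
  rw [tsum_eq_zero_add' ENNReal.summable]
  simp only [Nat.cast_zero, zero_mul, zero_add]
  rw [tsum_congr hs, ENNReal.tsum_mul_left, tsum_succ_geometric,
    ENNReal.sub_sub_cancel ENNReal.one_ne_top hp1, sq, ← mul_assoc,
    ENNReal.mul_inv_cancel hp0 hptop, one_mul]

/-! ### Convolution powers -/

lemma tsum_econvPow (m : ℕ → ℝ≥0∞) (k : ℕ) :
    ∑' t, econvPow m k t = (∑' t, m t) ^ k := by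
  induction k with
  | zero =>
      rw [pow_zero]
      exact (tsum_congr fun t => rfl).trans (tsum_ite_eq (0 : ℕ) (fun _ => (1 : ℝ≥0∞)))
  | succ k ih =>
      rw [pow_succ, ← ih]
      exact tsum_econv _ _

lemma tsum_mul_econvPow (m : ℕ → ℝ≥0∞) (hm : ∑' t, m t = 1) (k : ℕ) :
    ∑' t : ℕ, (t : ℝ≥0∞) * econvPow m k t = (k : ℝ≥0∞) * ∑' t : ℕ, (t : ℝ≥0∞) * m t := by
  induction k with
  | zero =>
      have h : ∀ t : ℕ, (t : ℝ≥0∞) * econvPow m 0 t = 0 := by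
        intro t
        rcases t with _ | t
        · simp
        · show ((t + 1 : ℕ) : ℝ≥0∞) * (if (t + 1 : ℕ) = 0 then 1 else 0) = 0
          rw [if_neg (Nat.succ_ne_zero t), mul_zero]
      rw [tsum_congr h]; simp
  | succ k ih =>
      have : econvPow m (k + 1) = econv (econvPow m k) m := rfl
      rw [this, tsum_mul_econv, ih, tsum_econvPow, hm, one_pow, mul_one, one_mul]
      push_cast; ring

lemma econvPow_le_one (m : ℕ → ℝ≥0∞) (hm : ∑' t, m t = 1) (k t : ℕ) :
    econvPow m k t ≤ 1 := by
  have h := ENNReal.le_tsum (f := econvPow m k) t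
  rw [tsum_econvPow, hm, one_pow] at h
  exact h

/-! ### Geometric compound sums -/

lemma tsum_ecomp {p : ℝ≥0∞} (hp0 : p ≠ 0) (hp1 : p ≤ 1) (m : ℕ → ℝ≥0∞)
    (hm : ∑' t, m t = 1) : ∑' t, ecomp p m t = 1 := by
  have hptop : p ≠ ∞ := ne_top_of_le_ne_top ENNReal.one_ne_top hp1
  unfold ecomp
  rw [ENNReal.tsum_comm]
  have h1 : ∀ k : ℕ, ∑' t : ℕ, p * (1 - p) ^ k * econvPow m (k + 1) t
      = p * (1 - p) ^ k := by
    intro k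
    rw [ENNReal.tsum_mul_left, tsum_econvPow, hm, one_pow, mul_one]
  rw [tsum_congr h1, ENNReal.tsum_mul_left, ENNReal.tsum_geometric,
    ENNReal.sub_sub_cancel ENNReal.one_ne_top hp1, ENNReal.mul_inv_cancel hp0 hptop]

lemma tsum_mul_ecomp {p : ℝ≥0∞} (hp0 : p ≠ 0) (hp1 : p ≤ 1) (m : ℕ → ℝ≥0∞)
    (hm : ∑' t, m t = 1) :
    ∑' t : ℕ, (t : ℝ≥0∞) * ecomp p m t = p⁻¹ * ∑' t : ℕ, (t : ℝ≥0∞) * m t := by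
  have hptop : p ≠ ∞ := ne_top_of_le_ne_top ENNReal.one_ne_top hp1
  set M : ℝ≥0∞ := ∑' t : ℕ, (t : ℝ≥0∞) * m t with hM
  unfold ecomp
  have step1 : ∀ t : ℕ, (t : ℝ≥0∞) * (∑' k : ℕ, p * (1 - p) ^ k * econvPow m (k + 1) t)
      = ∑' k : ℕ, p * (1 - p) ^ k * ((t : ℝ≥0∞) * econvPow m (k + 1) t) := by
    intro t
    rw [← ENNReal.tsum_mul_left]
    exact tsum_congr fun k => by ring
  rw [tsum_congr step1, ENNReal.tsum_comm]
  have step2 : ∀ k : ℕ, ∑' t : ℕ, p * (1 - p) ^ k * ((t : ℝ≥0∞) * econvPow m (k + 1) t)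
      = (p * M) * (((k : ℝ≥0∞) + 1) * (1 - p) ^ k) := by
    intro k
    rw [ENNReal.tsum_mul_left, tsum_mul_econvPow m hm, ← hM]
    push_cast; ring
  rw [tsum_congr step2, ENNReal.tsum_mul_left, tsum_succ_geometric,
    ENNReal.sub_sub_cancel ENNReal.one_ne_top hp1, sq]
  have : p * M * (p⁻¹ * p⁻¹) = (p * p⁻¹) * (p⁻¹ * M) := by ring
  rw [this, ENNReal.mul_inv_cancel hp0 hptop, one_mul]

lemma toReal_econv {a b : ℕ → ℝ≥0∞} {A B : ℕ → ℝ}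
    (ha : ∀ t, A t = (a t).toReal) (hb : ∀ t, B t = (b t).toReal)
    (hfa : ∀ t, a t ≠ ∞) (hfb : ∀ t, b t ≠ ∞) (u : ℕ) :
    conv A B u = (econv a b u).toReal := by
  unfold conv econv
  rw [ENNReal.toReal_sum (fun s _ => ENNReal.mul_ne_top (hfa s) (hfb _))]
  exact Finset.sum_congr rfl fun s _ => by rw [ha, hb, ENNReal.toReal_mul]

/-! ### The total mass and mean of `eUp` -/

lemma tsum_eUp {q r : ℝ≥0∞} (hq0 : q ≠ 0) (hq1 : q ≤ 1) (hr0 : r ≠ 0) (hr1 : r ≤ 1)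
    (n : ℕ) : ∑' t, eUp q r n t = 1 := by
  induction n with
  | zero => exact tsum_egeom hq0 hq1
  | succ n ih =>
      have : eUp q r (n + 1) = ecomp r (econv (eUp q r n) (eUp q r n)) := rfl
      rw [this]
      exact tsum_ecomp hr0 hr1 _ (by rw [tsum_econv, ih, one_mul])

lemma tsum_mul_eUp {q r : ℝ≥0∞} (hq0 : q ≠ 0) (hq1 : q ≤ 1) (hr0 : r ≠ 0) (hr1 : r ≤ 1)
    (n : ℕ) : ∑' t : ℕ, (t : ℝ≥0∞) * eUp q r n t = (2 * r⁻¹) ^ n * q⁻¹ := by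
  induction n with
  | zero => simpa [eUp] using tsum_mul_egeom hq0 hq1
  | succ n ih =>
      have h1 : eUp q r (n + 1) = ecomp r (econv (eUp q r n) (eUp q r n)) := rfl
      rw [h1, tsum_mul_ecomp hr0 hr1 _ (by rw [tsum_econv, tsum_eUp hq0 hq1 hr0 hr1, one_mul]),
        tsum_mul_econv, tsum_eUp hq0 hq1 hr0 hr1, ih, pow_succ]
      ring

/-! ### Tail-sum formula for the mean -/

lemma tsum_one_sub_cum (e : ℕ → ℝ≥0∞) (he : ∑' t, e t = 1) :
    ∑' t : ℕ, (1 - ∑ s ∈ Finset.range (t + 1), e s) = ∑' t : ℕ, (t : ℝ≥0∞) * e t := by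
  have htail : ∀ t : ℕ, 1 - ∑ s ∈ Finset.range (t + 1), e s
      = ∑' s : ℕ, if t < s then e s else 0 := by
    intro t
    have hsplit : (∑' s : ℕ, if t < s then e s else 0)
        + (∑ s ∈ Finset.range (t + 1), e s) = 1 := by
      have hF : (∑ s ∈ Finset.range (t + 1), e s) = ∑' s : ℕ, if s ≤ t then e s else 0 := by
        rw [tsum_eq_sum (s := Finset.range (t + 1))
          (fun b hb => if_neg (by simp only [Finset.mem_range] at hb; omega))]
        exact Finset.sum_congr rfl fun s hs =>
          (if_pos (by simp only [Finset.mem_range] at hs; omega)).symm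
      rw [hF, ← ENNReal.tsum_add, ← he]
      refine tsum_congr fun s => ?_
      by_cases h : s ≤ t
      · rw [if_neg (by omega), if_pos h, zero_add]
      · rw [if_pos (by omega), if_neg h, add_zero]
    exact (ENNReal.eq_sub_of_add_eq
      (ne_top_of_le_ne_top ENNReal.one_ne_top
        (he ▸ ENNReal.sum_le_tsum (Finset.range (t + 1)))) hsplit).symm
  rw [tsum_congr htail, ENNReal.tsum_comm]
  refine tsum_congr fun s => ?_
  rw [tsum_eq_sum (s := Finset.range s)
    (fun b hb => if_neg (by simp only [Finset.mem_range] at hb; omega)),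
    Finset.sum_congr rfl (fun t ht => if_pos (Finset.mem_range.1 ht)),
    Finset.sum_const, Finset.card_range, nsmul_eq_mul]

end RepeaterAux

open RepeaterAux

/-- The mean of the sequential variant `T_n^upper` can be computed exactly:
`Σ_{t=1}^{∞} (1 − F_n^up(t−1)) = (2/p_swap)^n · (1/p_gen)`
(the sum over `t ≥ 1` of `1 − F_n^up(t−1)` is written as the sum over `t : ℕ` of
`1 − F_n^up(t)`). -/
theorem mean_fUp (pgen pswap : ℝ)
    (hgen0 : 0 < pgen) (hgen1 : pgen ≤ 1) (hswap0 : 0 < pswap) (hswap1 : pswap ≤ 1) :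
    ∀ n : ℕ, ∑' t : ℕ, (1 - cum (fUp pgen pswap n) t) = (2 / pswap) ^ n * (1 / pgen) := by
  intro n
  set q : ℝ≥0∞ := ENNReal.ofReal pgen with hq
  set r : ℝ≥0∞ := ENNReal.ofReal pswap with hr
  have hq0 : q ≠ 0 := by simp [hq, ENNReal.ofReal_pos.2 hgen0, (ENNReal.ofReal_pos.2 hgen0).ne']
  have hq1 : q ≤ 1 := by rw [hq, ← ENNReal.ofReal_one]; exact ENNReal.ofReal_le_ofReal hgen1
  have hr0 : r ≠ 0 := by simp [hr, (ENNReal.ofReal_pos.2 hswap0).ne']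
  have hr1 : r ≤ 1 := by rw [hr, ← ENNReal.ofReal_one]; exact ENNReal.ofReal_le_ofReal hswap1
  have hqtop : q ≠ ∞ := ne_top_of_le_ne_top ENNReal.one_ne_top hq1
  have hrtop : r ≠ ∞ := ne_top_of_le_ne_top ENNReal.one_ne_top hr1
  -- one-minus conversions
  have h1q : (1 - q).toReal = 1 - pgen := by
    rw [ENNReal.toReal_sub_of_le hq1 ENNReal.one_ne_top, ENNReal.toReal_one, hq,
      ENNReal.toReal_ofReal hgen0.le]
  have h1r : (1 - r).toReal = 1 - pswap := by
    rw [ENNReal.toReal_sub_of_le hr1 ENNReal.one_ne_top, ENNReal.toReal_one, hr,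
      ENNReal.toReal_ofReal hswap0.le]
  -- pointwise conversion fUp = toReal of eUp
  have hconv : ∀ n t, fUp pgen pswap n t = (eUp q r n t).toReal := by
    intro n
    induction n with
    | zero =>
        intro t
        show geomPMF pgen t = (egeom q t).toReal
        unfold geomPMF egeom
        by_cases h : t = 0
        · simp [h]
        · rw [if_neg h, if_neg h, ENNReal.toReal_mul, ENNReal.toReal_pow, h1q, hq,
            ENNReal.toReal_ofReal hgen0.le]
    | succ n ih =>
        intro t
        have htot : ∑' s, eUp q r n s = 1 := tsum_eUp hq0 hq1 hr0 hr1 n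
        have hfin : ∀ s, eUp q r n s ≠ ∞ := fun s =>
          ne_top_of_le_ne_top ENNReal.one_ne_top (htot ▸ ENNReal.le_tsum s)
        -- conv conversion
        have hconv2 : ∀ u, conv (fUp pgen pswap n) (fUp pgen pswap n) u
            = (econv (eUp q r n) (eUp q r n) u).toReal :=
          toReal_econv ih ih hfin hfin
        have hmtot : ∑' s, econv (eUp q r n) (eUp q r n) s = 1 := by
          rw [tsum_econv, htot, one_mul]
        have hmfin : ∀ k u, econvPow (econv (eUp q r n) (eUp q r n)) k u ≠ ∞ := fun k u =>
          ne_top_of_le_ne_top ENNReal.one_ne_top (econvPow_le_one _ hmtot k u)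
        -- convPow conversion
        have hcp : ∀ k u, convPow (conv (fUp pgen pswap n) (fUp pgen pswap n)) k u
            = (econvPow (econv (eUp q r n) (eUp q r n)) k u).toReal := by
          intro k
          induction k with
          | zero =>
              intro u
              show (if u = 0 then (1:ℝ) else 0) = ((if u = 0 then (1:ℝ≥0∞) else 0)).toReal
              by_cases h : u = 0 <;> simp [h]
          | succ k ihk =>
              have hmfin' : ∀ u, econv (eUp q r n) (eUp q r n) u ≠ ∞ := fun u =>
                ne_top_of_le_ne_top ENNReal.one_ne_top (hmtot ▸ ENNReal.le_tsum u)
              exact fun u => toReal_econv ihk hconv2 (hmfin k) hmfin' u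
        -- geomCompound conversion
        show geomCompound pswap (conv (fUp pgen pswap n) (fUp pgen pswap n)) t
            = (ecomp r (econv (eUp q r n) (eUp q r n)) t).toReal
        unfold geomCompound ecomp
        rw [ENNReal.tsum_toReal_eq (fun k => ENNReal.mul_ne_top
          (ENNReal.mul_ne_top hrtop (ENNReal.pow_ne_top
            (ne_top_of_le_ne_top ENNReal.one_ne_top tsub_le_self))) (hmfin _ t))]
        refine tsum_congr fun k => ?_
        rw [ENNReal.toReal_mul, ENNReal.toReal_mul, ENNReal.toReal_pow, h1r, hr,
          ENNReal.toReal_ofReal hswap0.le, hcp]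
  -- totals and bounds for level n
  have htot : ∑' s, eUp q r n s = 1 := tsum_eUp hq0 hq1 hr0 hr1 n
  have hFle : ∀ t, (∑ s ∈ Finset.range (t + 1), eUp q r n s) ≤ 1 := fun t =>
    htot ▸ ENNReal.sum_le_tsum (Finset.range (t + 1))
  have hfin : ∀ s, eUp q r n s ≠ ∞ := fun s =>
    ne_top_of_le_ne_top ENNReal.one_ne_top (htot ▸ ENNReal.le_tsum s)
  -- cum conversion
  have hcum : ∀ t, cum (fUp pgen pswap n) t = (∑ s ∈ Finset.range (t + 1), eUp q r n s).toReal := by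
    intro t
    unfold cum
    rw [ENNReal.toReal_sum (fun a _ => hfin a)]
    exact Finset.sum_congr rfl fun s _ => hconv n s
  have hterm : ∀ t : ℕ, 1 - cum (fUp pgen pswap n) t
      = ((1 : ℝ≥0∞) - ∑ s ∈ Finset.range (t + 1), eUp q r n s).toReal := by
    intro t
    rw [ENNReal.toReal_sub_of_le (hFle t) ENNReal.one_ne_top, ENNReal.toReal_one, hcum]
  rw [tsum_congr hterm, ← ENNReal.tsum_toReal_eq
    (fun t => ne_top_of_le_ne_top ENNReal.one_ne_top tsub_le_self),
    tsum_one_sub_cum _ htot, tsum_mul_eUp hq0 hq1 hr0 hr1 n]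
  rw [ENNReal.toReal_mul, ENNReal.toReal_pow, ENNReal.toReal_mul, ENNReal.toReal_inv,
    ENNReal.toReal_inv, ENNReal.toReal_ofNat, hq, hr, ENNReal.toReal_ofReal hgen0.le,
    ENNReal.toReal_ofReal hswap0.le]
  rw [div_eq_mul_inv, one_div]
end
end

section
/- Fix p_gen, p_swap ∈ (0,1], and let (f_n) and (f_n^up) be the waiting-time distributions of the SWAP-ONLY protocol and its dominating sequential variant, with cumulative sums F_n and F_n^up. Then for every n ≥ 0 and every truncation time t_trunc ∈ ℕ, the difference between the real mean and the empirical mean of the waiting time T_n is bounded as 0 ≤ E[f_n] − Σ_{t=1}^{t_trunc} (1 − F_n(t−1)) ≤ (2/p_swap)^n·(1/p_gen) − Σ_{t=1}^{t_trunc} (1 − F_n^up(t−1)), and the two bounds coincide in the limit t_trunc → ∞. -/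
noncomputable section

open RepeaterChain

namespace PropAux
open Finset

lemma cum_succ (f : ℕ → ℝ) (t : ℕ) : cum f (t + 1) = cum f t + f (t + 1) := by
  simp [cum, Finset.sum_range_succ]

lemma cum_zero (f : ℕ → ℝ) : cum f 0 = f 0 := by simp [cum]

lemma cum_nonneg {f : ℕ → ℝ} (hf : ∀ t, 0 ≤ f t) (t : ℕ) : 0 ≤ cum f t :=
  Finset.sum_nonneg fun s _ => hf s

lemma cum_mono {f : ℕ → ℝ} (hf : ∀ t, 0 ≤ f t) : Monotone (cum f) := by
  intro s t hst
  exact Finset.sum_le_sum_of_subset_of_nonneg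
    (Finset.range_subset_range.2 (by omega)) (fun i _ _ => hf i)

lemma conv_nonneg {a b : ℕ → ℝ} (ha : ∀ t, 0 ≤ a t) (hb : ∀ t, 0 ≤ b t) (t : ℕ) :
    0 ≤ conv a b t :=
  Finset.sum_nonneg fun s _ => mul_nonneg (ha s) (hb _)

lemma conv_zero_eval (a b : ℕ → ℝ) : conv a b 0 = a 0 * b 0 := by simp [conv]

/-- `cum (conv a b) t = ∑_{s≤t} a s * cum b (t-s)`. -/
lemma cum_conv (a b : ℕ → ℝ) (t : ℕ) :
    cum (conv a b) t = ∑ s ∈ Finset.range (t + 1), a s * cum b (t - s) := by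
  induction t with
  | zero => simp [cum, conv]
  | succ t ih =>
    rw [cum_succ, ih]
    have h1 : ∑ s ∈ Finset.range (t + 1 + 1), a s * cum b (t + 1 - s)
        = (∑ s ∈ Finset.range (t + 1), a s * cum b (t + 1 - s)) + a (t+1) * cum b 0 := by
      rw [Finset.sum_range_succ]; simp
    have h2 : ∀ s ∈ Finset.range (t + 1), a s * cum b (t + 1 - s)
        = a s * cum b (t - s) + a s * b (t + 1 - s) := by
      intro s hs
      rw [Finset.mem_range] at hs
      have : t + 1 - s = (t - s) + 1 := by omega
      rw [this, cum_succ, mul_add]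
    rw [h1, Finset.sum_congr rfl h2, Finset.sum_add_distrib]
    have h3 : conv a b (t+1) = (∑ s ∈ Finset.range (t + 1), a s * b (t + 1 - s))
        + a (t+1) * b 0 := by
      rw [conv, Finset.sum_range_succ]; simp
    rw [h3, cum_zero]
    ring

/-- Abel summation identity. -/
lemma abel_sum (a g : ℕ → ℝ) (t : ℕ) :
    ∑ s ∈ Finset.range (t + 1), a s * g s
      = cum a t * g t + ∑ s ∈ Finset.range t, cum a s * (g s - g (s + 1)) := by
  induction t with
  | zero => simp [cum]
  | succ t ih =>
    rw [Finset.sum_range_succ, ih, Finset.sum_range_succ, cum_succ]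
    ring

lemma sum_mul_le_of_cum_le {a a' g : ℕ → ℝ} (ha' : ∀ t, 0 ≤ a' t)
    (hc : ∀ t, cum a' t ≤ cum a t) (hg0 : ∀ t, 0 ≤ g t)
    (hgm : ∀ t, g (t + 1) ≤ g t) (t : ℕ) :
    ∑ s ∈ Finset.range (t + 1), a' s * g s ≤ ∑ s ∈ Finset.range (t + 1), a s * g s := by
  rw [abel_sum, abel_sum]
  apply add_le_add
  · exact mul_le_mul_of_nonneg_right (hc t) (hg0 t)
  · exact Finset.sum_le_sum fun s _ =>
      mul_le_mul_of_nonneg_right (hc s) (sub_nonneg.2 (hgm s))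

end PropAux
namespace PropAux

/-- Sub-probability mass function supported on `{1,2,…}`. -/
structure Good (f : ℕ → ℝ) : Prop where
  nonneg : ∀ t, 0 ≤ f t
  zero : f 0 = 0
  cum_le_one : ∀ t, cum f t ≤ 1

lemma Good.cum_nonneg' {f : ℕ → ℝ} (hf : Good f) (t : ℕ) : 0 ≤ cum f t :=
  cum_nonneg hf.nonneg t

lemma cum_conv_le_one {a b : ℕ → ℝ} (ha : ∀ t, 0 ≤ a t) (hb : ∀ t, 0 ≤ b t)
    (ha1 : ∀ t, cum a t ≤ 1) (hb1 : ∀ t, cum b t ≤ 1) (t : ℕ) :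
    cum (conv a b) t ≤ 1 := by
  rw [cum_conv]
  calc ∑ s ∈ Finset.range (t + 1), a s * cum b (t - s)
      ≤ ∑ s ∈ Finset.range (t + 1), a s * 1 :=
        Finset.sum_le_sum fun s _ => mul_le_mul_of_nonneg_left (hb1 _) (ha s)
    _ = cum a t := by simp [cum]
    _ ≤ 1 := ha1 t

lemma Good.conv {a b : ℕ → ℝ} (ha : Good a) (hb : Good b) : Good (conv a b) where
  nonneg := conv_nonneg ha.nonneg hb.nonneg
  zero := by rw [conv_zero_eval, ha.zero, zero_mul]
  cum_le_one := cum_conv_le_one ha.nonneg hb.nonneg ha.cum_le_one hb.cum_le_one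

lemma Good.geomPMF {p : ℝ} (hp0 : 0 < p) (hp1 : p ≤ 1) : Good (geomPMF p) where
  nonneg := fun t => by
    unfold RepeaterChain.geomPMF
    split
    · exact le_refl 0
    · exact mul_nonneg hp0.le (pow_nonneg (by linarith) _)
  zero := by simp [RepeaterChain.geomPMF]
  cum_le_one := fun t => by
    have h : ∀ t, cum (RepeaterChain.geomPMF p) t = 1 - (1 - p) ^ t := by
      intro t
      induction t with
      | zero => simp [cum, RepeaterChain.geomPMF]
      | succ t ih =>
        rw [cum_succ, ih]
        simp only [RepeaterChain.geomPMF, Nat.succ_ne_zero, if_false, Nat.add_sub_cancel]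
        ring
    rw [h]
    nlinarith [pow_nonneg (by linarith : (0:ℝ) ≤ 1 - p) t]

lemma cum_geomPMF {p : ℝ} (t : ℕ) : cum (geomPMF p) t = 1 - (1 - p) ^ t := by
  induction t with
  | zero => simp [cum, RepeaterChain.geomPMF]
  | succ t ih =>
    rw [cum_succ, ih]
    simp only [RepeaterChain.geomPMF, Nat.succ_ne_zero, if_false, Nat.add_sub_cancel]
    ring

lemma cum_maxPMF {f : ℕ → ℝ} (hf : Good f) (t : ℕ) :
    cum (maxPMF f) t = (cum f t) ^ 2 := by
  induction t with
  | zero => simp [cum, maxPMF, hf.zero]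
  | succ t ih =>
    rw [cum_succ, ih]
    simp [maxPMF]

lemma Good.maxPMF {f : ℕ → ℝ} (hf : Good f) : Good (maxPMF f) where
  nonneg := fun t => by
    unfold RepeaterChain.maxPMF
    split
    · exact le_refl 0
    · rename_i ht
      have := cum_mono hf.nonneg (show t - 1 ≤ t by omega)
      have h0 := hf.cum_nonneg' (t - 1)
      nlinarith
  zero := by simp [RepeaterChain.maxPMF]
  cum_le_one := fun t => by
    rw [cum_maxPMF hf]
    nlinarith [hf.cum_le_one t, hf.cum_nonneg' t]

lemma conv_delta (g : ℕ → ℝ) : conv (fun t => if t = 0 then 1 else 0) g = g := by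
  funext t
  rw [conv, Finset.sum_eq_single 0]
  · simp
  · intro s _ hs; simp [hs]
  · intro h; simp at h

lemma convPow_nonneg {m : ℕ → ℝ} (hm : ∀ t, 0 ≤ m t) (k t : ℕ) :
    0 ≤ convPow m k t := by
  induction k generalizing t with
  | zero => unfold convPow; split <;> norm_num
  | succ k ih => exact conv_nonneg ih hm t

lemma cum_delta (t : ℕ) : cum (fun t : ℕ => if t = 0 then (1:ℝ) else 0) t = 1 := by
  induction t with
  | zero => simp [cum]
  | succ t ih => rw [cum_succ, ih]; simp

lemma cum_convPow_le_one {m : ℕ → ℝ} (hm : ∀ t, 0 ≤ m t) (hm1 : ∀ t, cum m t ≤ 1)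
    (k t : ℕ) : cum (convPow m k) t ≤ 1 := by
  induction k generalizing t with
  | zero => rw [show convPow m 0 = fun t : ℕ => if t = 0 then (1:ℝ) else 0 from rfl, cum_delta]
  | succ k ih => exact cum_conv_le_one (convPow_nonneg hm k) hm ih hm1 t

lemma convPow_le_one {m : ℕ → ℝ} (hm : ∀ t, 0 ≤ m t) (hm1 : ∀ t, cum m t ≤ 1)
    (k t : ℕ) : convPow m k t ≤ 1 := by
  calc convPow m k t ≤ cum (convPow m k) t := by
        rcases t with _ | t
        · rw [cum_zero]
        · rw [cum_succ]
          have := cum_nonneg (convPow_nonneg hm k) t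
          linarith
    _ ≤ 1 := cum_convPow_le_one hm hm1 k t

/-- Monotonicity of convolution w.r.t. cumulative domination. -/
lemma cum_conv_mono {a a' b b' : ℕ → ℝ} (ha' : ∀ t, 0 ≤ a' t) (hb : ∀ t, 0 ≤ b t)
    (hb' : ∀ t, 0 ≤ b' t)
    (hca : ∀ t, cum a' t ≤ cum a t) (hcb : ∀ t, cum b' t ≤ cum b t) (t : ℕ) :
    cum (conv a' b') t ≤ cum (conv a b) t := by
  rw [cum_conv, cum_conv]
  calc ∑ s ∈ Finset.range (t + 1), a' s * cum b' (t - s)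
      ≤ ∑ s ∈ Finset.range (t + 1), a' s * cum b (t - s) :=
        Finset.sum_le_sum fun s _ => mul_le_mul_of_nonneg_left (hcb _) (ha' s)
    _ ≤ ∑ s ∈ Finset.range (t + 1), a s * cum b (t - s) := by
        apply sum_mul_le_of_cum_le ha' hca (fun s => cum_nonneg hb _)
        intro s
        exact cum_mono hb (by omega)

lemma cum_convPow_mono {m m' : ℕ → ℝ} (hm : ∀ t, 0 ≤ m t) (hm' : ∀ t, 0 ≤ m' t)
    (hc : ∀ t, cum m' t ≤ cum m t) (k t : ℕ) :
    cum (convPow m' k) t ≤ cum (convPow m k) t := by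
  induction k generalizing t with
  | zero => exact le_refl _
  | succ k ih => exact cum_conv_mono (convPow_nonneg hm' k) hm hm' ih hc t

end PropAux
namespace PropAux

variable {p : ℝ} {m : ℕ → ℝ}

lemma summable_geom_coeff (hp0 : 0 < p) (hp1 : p ≤ 1) {c : ℕ → ℝ}
    (hc0 : ∀ k, 0 ≤ c k) (hc1 : ∀ k, c k ≤ 1) :
    Summable (fun k => p * (1 - p) ^ k * c k) := by
  have hr0 : (0:ℝ) ≤ 1 - p := by linarith
  have hr1 : (1:ℝ) - p < 1 := by linarith
  apply Summable.of_nonneg_of_le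
    (fun k => mul_nonneg (mul_nonneg hp0.le (pow_nonneg hr0 k)) (hc0 k))
    (fun k => ?_) ((summable_geometric_of_lt_one hr0 hr1).mul_left p)
  calc p * (1 - p) ^ k * c k ≤ p * (1 - p) ^ k * 1 :=
        mul_le_mul_of_nonneg_left (hc1 k) (mul_nonneg hp0.le (pow_nonneg hr0 k))
    _ = p * (1 - p) ^ k := by ring

lemma tsum_p_geom (hp0 : 0 < p) (hp1 : p ≤ 1) : ∑' k : ℕ, p * (1 - p) ^ k = 1 := by
  have hr0 : (0:ℝ) ≤ 1 - p := by linarith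
  have hr1 : (1:ℝ) - p < 1 := by linarith
  rw [tsum_mul_left, tsum_geometric_of_lt_one hr0 hr1]
  field_simp
  rw [sub_sub_cancel, div_self hp0.ne']

lemma summable_geomCompound_term (hp0 : 0 < p) (hp1 : p ≤ 1) (hm : Good m) (t : ℕ) :
    Summable (fun k => p * (1 - p) ^ k * convPow m (k + 1) t) :=
  summable_geom_coeff hp0 hp1 (fun k => convPow_nonneg hm.nonneg (k+1) t)
    (fun k => convPow_le_one hm.nonneg hm.cum_le_one (k+1) t)

lemma cum_geomCompound (hp0 : 0 < p) (hp1 : p ≤ 1) (hm : Good m) (t : ℕ) :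
    cum (geomCompound p m) t
      = ∑' k : ℕ, p * (1 - p) ^ k * cum (convPow m (k + 1)) t := by
  have := Summable.tsum_finsetSum (s := Finset.range (t + 1))
    (f := fun s k => p * (1 - p) ^ k * convPow m (k + 1) s)
    (fun s _ => summable_geomCompound_term hp0 hp1 hm s)
  rw [show cum (geomCompound p m) t
      = ∑ s ∈ Finset.range (t+1), ∑' k : ℕ, p * (1 - p) ^ k * convPow m (k + 1) s from rfl,
    ← this]
  congr 1
  funext k
  rw [show cum (convPow m (k+1)) t = ∑ s ∈ Finset.range (t+1), convPow m (k+1) s from rfl,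
    Finset.mul_sum]

lemma summable_geomCompound_cum_term (hp0 : 0 < p) (hp1 : p ≤ 1) (hm : Good m) (t : ℕ) :
    Summable (fun k => p * (1 - p) ^ k * cum (convPow m (k + 1)) t) :=
  summable_geom_coeff hp0 hp1 (fun k => cum_nonneg (convPow_nonneg hm.nonneg (k+1)) t)
    (fun k => cum_convPow_le_one hm.nonneg hm.cum_le_one (k+1) t)

lemma convPow_succ_zero (hm0 : m 0 = 0) (k : ℕ) : convPow m (k + 1) 0 = 0 := by
  rw [show convPow m (k+1) = conv (convPow m k) m from rfl, conv_zero_eval, hm0, mul_zero]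

lemma Good.geomCompound (hp0 : 0 < p) (hp1 : p ≤ 1) (hm : Good m) :
    Good (geomCompound p m) where
  nonneg := fun t => tsum_nonneg fun k =>
    mul_nonneg (mul_nonneg hp0.le (pow_nonneg (by linarith) k))
      (convPow_nonneg hm.nonneg (k+1) t)
  zero := by
    rw [show RepeaterChain.geomCompound p m 0
        = ∑' k : ℕ, p * (1 - p) ^ k * convPow m (k + 1) 0 from rfl]
    simp [convPow_succ_zero hm.zero]
  cum_le_one := fun t => by
    rw [cum_geomCompound hp0 hp1 hm]
    refine le_trans (Summable.tsum_le_tsum (fun k => ?_)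
      (summable_geomCompound_cum_term hp0 hp1 hm t)
      ((summable_geometric_of_lt_one (by linarith) (by linarith)).mul_left p))
      (le_of_eq (tsum_p_geom hp0 hp1))
    calc p * (1 - p) ^ k * cum (convPow m (k+1)) t ≤ p * (1 - p) ^ k * 1 :=
          mul_le_mul_of_nonneg_left (cum_convPow_le_one hm.nonneg hm.cum_le_one (k+1) t)
            (mul_nonneg hp0.le (pow_nonneg (by linarith) k))
      _ = p * (1 - p) ^ k := by ring

lemma cum_geomCompound_mono (hp0 : 0 < p) (hp1 : p ≤ 1) {m' : ℕ → ℝ}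
    (hm : Good m) (hm' : Good m') (hc : ∀ t, cum m' t ≤ cum m t) (t : ℕ) :
    cum (geomCompound p m') t ≤ cum (geomCompound p m) t := by
  rw [cum_geomCompound hp0 hp1 hm', cum_geomCompound hp0 hp1 hm]
  apply Summable.tsum_le_tsum _ (summable_geomCompound_cum_term hp0 hp1 hm' t)
    (summable_geomCompound_cum_term hp0 hp1 hm t)
  intro k
  exact mul_le_mul_of_nonneg_left (cum_convPow_mono hm.nonneg hm'.nonneg hc (k+1) t)
    (mul_nonneg hp0.le (pow_nonneg (by linarith) k))

end PropAux
namespace PropAux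

variable {pgen pswap : ℝ}

lemma good_fSwap (hg0 : 0 < pgen) (hg1 : pgen ≤ 1) (hs0 : 0 < pswap) (hs1 : pswap ≤ 1)
    (n : ℕ) : Good (fSwap pgen pswap n) := by
  induction n with
  | zero => exact Good.geomPMF hg0 hg1
  | succ n ih => exact Good.geomCompound hs0 hs1 ih.maxPMF

lemma good_fUp (hg0 : 0 < pgen) (hg1 : pgen ≤ 1) (hs0 : 0 < pswap) (hs1 : pswap ≤ 1)
    (n : ℕ) : Good (fUp pgen pswap n) := by
  induction n with
  | zero => exact Good.geomPMF hg0 hg1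
  | succ n ih => exact Good.geomCompound hs0 hs1 (ih.conv ih)

lemma cum_fUp_le_cum_fSwap (hg0 : 0 < pgen) (hg1 : pgen ≤ 1) (hs0 : 0 < pswap)
    (hs1 : pswap ≤ 1) (n : ℕ) (t : ℕ) :
    cum (fUp pgen pswap n) t ≤ cum (fSwap pgen pswap n) t := by
  induction n generalizing t with
  | zero => exact le_refl _
  | succ n ih =>
    have hu := good_fUp hg0 hg1 hs0 hs1 n
    have hw := good_fSwap hg0 hg1 hs0 hs1 n
    refine cum_geomCompound_mono hs0 hs1 hw.maxPMF (hu.conv hu) (fun t => ?_) t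
    rw [cum_maxPMF hw, cum_conv]
    calc ∑ s ∈ Finset.range (t + 1), fUp pgen pswap n s * cum (fUp pgen pswap n) (t - s)
        ≤ ∑ s ∈ Finset.range (t + 1), fUp pgen pswap n s * cum (fUp pgen pswap n) t :=
          Finset.sum_le_sum fun s _ => mul_le_mul_of_nonneg_left
            (cum_mono hu.nonneg (by omega)) (hu.nonneg s)
      _ = cum (fUp pgen pswap n) t * cum (fUp pgen pswap n) t := by
          rw [← Finset.sum_mul]; rfl
      _ ≤ cum (fSwap pgen pswap n) t * cum (fSwap pgen pswap n) t := by
          have h1 := ih t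
          have h2 := hu.cum_nonneg' t
          have h3 := hw.cum_nonneg' t
          nlinarith
      _ = cum (fSwap pgen pswap n) t ^ 2 := (sq _).symm

end PropAux
namespace PropAux

/-- Tail of a distribution. -/
def tail (f : ℕ → ℝ) : ℕ → ℝ := fun t => 1 - cum f t

lemma tail_nonneg {f : ℕ → ℝ} (h1 : ∀ t, cum f t ≤ 1) (t : ℕ) : 0 ≤ tail f t :=
  sub_nonneg.2 (h1 t)

lemma summable_of_cum_le_one {f : ℕ → ℝ} (h0 : ∀ t, 0 ≤ f t) (h1 : ∀ t, cum f t ≤ 1) :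
    Summable f := by
  apply summable_of_sum_range_le (c := 1) h0
  intro n
  rcases n with _ | n
  · simp
  · exact h1 n

lemma summable_norm_of_nonneg {f : ℕ → ℝ} (h0 : ∀ t, 0 ≤ f t) (hs : Summable f) :
    Summable fun t => ‖f t‖ :=
  hs.congr fun t => (Real.norm_of_nonneg (h0 t)).symm

lemma summable_conv {a b : ℕ → ℝ} (ha0 : ∀ t, 0 ≤ a t) (hb0 : ∀ t, 0 ≤ b t)
    (ha : Summable a) (hb : Summable b) : Summable (conv a b) :=
  (summable_norm_sum_mul_range_of_summable_norm
    (summable_norm_of_nonneg ha0 ha) (summable_norm_of_nonneg hb0 hb)).of_norm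

lemma tsum_conv {a b : ℕ → ℝ} (ha0 : ∀ t, 0 ≤ a t) (hb0 : ∀ t, 0 ≤ b t)
    (ha : Summable a) (hb : Summable b) :
    ∑' t, conv a b t = (∑' t, a t) * (∑' t, b t) :=
  (tsum_mul_tsum_eq_tsum_sum_range_of_summable_norm
    (summable_norm_of_nonneg ha0 ha) (summable_norm_of_nonneg hb0 hb)).symm

lemma tail_conv (a b : ℕ → ℝ) (t : ℕ) :
    tail (conv a b) t = tail a t + conv a (tail b) t := by
  have h : conv a (tail b) t = cum a t - cum (conv a b) t := by
    rw [cum_conv, conv]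
    simp only [tail, mul_sub, mul_one, Finset.sum_sub_distrib]
    rfl
  simp only [tail] at *
  linarith

lemma summable_tail_conv {a b : ℕ → ℝ} (ha0 : ∀ t, 0 ≤ a t) (ha1 : ∀ t, cum a t ≤ 1)
    (hb1 : ∀ t, cum b t ≤ 1)
    (hta : Summable (tail a)) (htb : Summable (tail b)) :
    Summable (tail (conv a b)) := by
  have : Summable (fun t => tail a t + conv a (tail b) t) :=
    hta.add (summable_conv ha0 (tail_nonneg hb1)
      (summable_of_cum_le_one ha0 ha1) htb)
  exact this.congr fun t => (tail_conv a b t).symm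

lemma tsum_tail_conv {a b : ℕ → ℝ} (ha0 : ∀ t, 0 ≤ a t) (ha1 : ∀ t, cum a t ≤ 1)
    (hb1 : ∀ t, cum b t ≤ 1)
    (hta : Summable (tail a)) (htb : Summable (tail b)) :
    ∑' t, tail (conv a b) t
      = (∑' t, tail a t) + (∑' t, a t) * (∑' t, tail b t) := by
  have hsa := summable_of_cum_le_one ha0 ha1
  calc ∑' t, tail (conv a b) t = ∑' t, (tail a t + conv a (tail b) t) :=
        tsum_congr fun t => tail_conv a b t
    _ = (∑' t, tail a t) + ∑' t, conv a (tail b) t :=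
        Summable.tsum_add hta (summable_conv ha0 (tail_nonneg hb1) hsa htb)
    _ = (∑' t, tail a t) + (∑' t, a t) * (∑' t, tail b t) := by
        rw [tsum_conv ha0 (tail_nonneg hb1) hsa htb]

lemma tail_convPow_zero (m : ℕ → ℝ) (t : ℕ) : tail (convPow m 0) t = 0 := by
  rw [show tail (convPow m 0) t = 1 - cum (fun t : ℕ => if t = 0 then (1:ℝ) else 0) t from rfl,
    cum_delta, sub_self]

lemma summable_convPow {m : ℕ → ℝ} (hm : ∀ t, 0 ≤ m t) (hm1 : ∀ t, cum m t ≤ 1) (k : ℕ) :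
    Summable (convPow m k) :=
  summable_of_cum_le_one (convPow_nonneg hm k) (cum_convPow_le_one hm hm1 k)

lemma tsum_convPow {m : ℕ → ℝ} (hm0 : ∀ t, 0 ≤ m t) (hm1 : ∀ t, cum m t ≤ 1)
    (hmass : ∑' t, m t = 1) (k : ℕ) :
    ∑' t, convPow m k t = 1 := by
  have hsm := summable_of_cum_le_one hm0 hm1
  induction k with
  | zero =>
    rw [show convPow m 0 = fun t : ℕ => if t = 0 then (1:ℝ) else 0 from rfl]
    rw [tsum_eq_single 0]
    · simp
    · intro b hb; simp [hb]
  | succ k ih =>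
    rw [show convPow m (k+1) = conv (convPow m k) m from rfl,
      tsum_conv (convPow_nonneg hm0 k) hm0 (summable_convPow hm0 hm1 k) hsm, ih, hmass, one_mul]

lemma summable_tail_convPow {m : ℕ → ℝ} (hm0 : ∀ t, 0 ≤ m t) (hm1 : ∀ t, cum m t ≤ 1)
    (htm : Summable (tail m)) (k : ℕ) :
    Summable (tail (convPow m k)) := by
  induction k with
  | zero => exact summable_zero.congr fun t => (tail_convPow_zero m t).symm
  | succ k ih =>
    exact summable_tail_conv (convPow_nonneg hm0 k) (cum_convPow_le_one hm0 hm1 k) hm1 ih htm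

lemma tsum_tail_convPow {m : ℕ → ℝ} (hm0 : ∀ t, 0 ≤ m t) (hm1 : ∀ t, cum m t ≤ 1)
    (hmass : ∑' t, m t = 1) (htm : Summable (tail m)) (k : ℕ) :
    ∑' t, tail (convPow m k) t = k * ∑' t, tail m t := by
  induction k with
  | zero => simp [tail_convPow_zero m]
  | succ k ih =>
    rw [show convPow m (k+1) = conv (convPow m k) m from rfl,
      tsum_tail_conv (convPow_nonneg hm0 k) (cum_convPow_le_one hm0 hm1 k) hm1
        (summable_tail_convPow hm0 hm1 htm k) htm,
      tsum_convPow hm0 hm1 hmass k, ih]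
    push_cast
    ring

end PropAux
namespace PropAux

variable {p : ℝ} {m : ℕ → ℝ}

lemma r_nonneg (hp1 : p ≤ 1) : (0:ℝ) ≤ 1 - p := by linarith
lemma r_lt_one (hp0 : 0 < p) : (1:ℝ) - p < 1 := by linarith

lemma tsum_geomCompound_mass (hp0 : 0 < p) (hp1 : p ≤ 1) (hm : Good m)
    (hmass : ∑' t, m t = 1) :
    ∑' t, geomCompound p m t = 1 := by
  have hF0 : ∀ q : ℕ × ℕ, 0 ≤ p * (1 - p) ^ q.1 * convPow m (q.1 + 1) q.2 := fun q =>
    mul_nonneg (mul_nonneg hp0.le (pow_nonneg (r_nonneg hp1) _))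
      (convPow_nonneg hm.nonneg _ _)
  have h1 : ∀ k, Summable fun t => p * (1 - p) ^ k * convPow m (k + 1) t := fun k =>
    (summable_convPow hm.nonneg hm.cum_le_one (k+1)).mul_left _
  have hmarg : ∀ k : ℕ, (∑' t, p * (1 - p) ^ k * convPow m (k + 1) t)
      = p * (1 - p) ^ k := by
    intro k
    rw [tsum_mul_left, tsum_convPow hm.nonneg hm.cum_le_one hmass (k+1), mul_one]
  have h2 : Summable fun k : ℕ => ∑' t, p * (1 - p) ^ k * convPow m (k + 1) t := by
    apply Summable.congr (f := fun k => p * (1 - p) ^ k)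
    · exact (summable_geometric_of_lt_one (r_nonneg hp1) (r_lt_one hp0)).mul_left p
    · exact fun k => (hmarg k).symm
  have hFs : Summable (fun q : ℕ × ℕ => p * (1 - p) ^ q.1 * convPow m (q.1 + 1) q.2) :=
    (summable_prod_of_nonneg hF0).2 ⟨h1, h2⟩
  have hcomm := Summable.tsum_comm' (f := fun k t => p * (1 - p) ^ k * convPow m (k + 1) t) hFs h1
    (fun t => summable_geomCompound_term hp0 hp1 hm t)
  calc ∑' t, geomCompound p m t
      = ∑' (t) (k), p * (1 - p) ^ k * convPow m (k + 1) t := rfl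
    _ = ∑' (k) (t), p * (1 - p) ^ k * convPow m (k + 1) t := hcomm
    _ = ∑' k : ℕ, p * (1 - p) ^ k := tsum_congr hmarg
    _ = 1 := tsum_p_geom hp0 hp1

lemma tail_geomCompound (hp0 : 0 < p) (hp1 : p ≤ 1) (hm : Good m) (t : ℕ) :
    tail (geomCompound p m) t
      = ∑' k : ℕ, p * (1 - p) ^ k * tail (convPow m (k + 1)) t := by
  have hgeo : Summable fun k : ℕ => p * (1 - p) ^ k :=
    (summable_geometric_of_lt_one (r_nonneg hp1) (r_lt_one hp0)).mul_left p
  calc tail (geomCompound p m) t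
      = 1 - ∑' k : ℕ, p * (1 - p) ^ k * cum (convPow m (k + 1)) t := by
        rw [show tail (geomCompound p m) t = 1 - cum (geomCompound p m) t from rfl,
          cum_geomCompound hp0 hp1 hm]
    _ = (∑' k : ℕ, p * (1 - p) ^ k)
          - ∑' k : ℕ, p * (1 - p) ^ k * cum (convPow m (k + 1)) t := by
        rw [tsum_p_geom hp0 hp1]
    _ = ∑' k : ℕ, (p * (1 - p) ^ k - p * (1 - p) ^ k * cum (convPow m (k + 1)) t) :=
        (Summable.tsum_sub hgeo (summable_geomCompound_cum_term hp0 hp1 hm t)).symm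
    _ = ∑' k : ℕ, p * (1 - p) ^ k * tail (convPow m (k + 1)) t := by
        refine tsum_congr fun k => ?_
        rw [show tail (convPow m (k+1)) t = 1 - cum (convPow m (k+1)) t from rfl]
        ring

lemma tsum_p_geom_succ (hp0 : 0 < p) (hp1 : p ≤ 1) :
    ∑' k : ℕ, p * (1 - p) ^ k * ((k : ℝ) + 1) = 1 / p := by
  have hr0 := r_nonneg hp1
  have hr1 := r_lt_one hp0
  have hnorm : ‖(1 - p : ℝ)‖ < 1 := by rw [Real.norm_eq_abs, abs_of_nonneg hr0]; exact hr1
  have hs1 : Summable fun k : ℕ => (k : ℝ) * (1 - p) ^ k := by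
    simpa using summable_pow_mul_geometric_of_norm_lt_one 1 hnorm
  have hs2 : Summable fun k : ℕ => (1 - p : ℝ) ^ k := summable_geometric_of_lt_one hr0 hr1
  have key : (fun k : ℕ => p * (1 - p) ^ k * ((k : ℝ) + 1))
      = fun k : ℕ => p * ((k : ℝ) * (1 - p) ^ k + (1 - p) ^ k) := by
    funext k; ring
  rw [key, tsum_mul_left, Summable.tsum_add hs1 hs2, tsum_coe_mul_geometric_of_norm_lt_one hnorm,
    tsum_geometric_of_lt_one hr0 hr1]
  have hp' : p ≠ 0 := ne_of_gt hp0
  field_simp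
  rw [sub_sub_cancel, sub_add_cancel, mul_one, div_self (pow_ne_zero 2 hp')]

lemma summable_coeff_succ (hp0 : 0 < p) (hp1 : p ≤ 1) (c : ℝ) :
    Summable fun k : ℕ => p * (1 - p) ^ k * (((k : ℝ) + 1) * c) := by
  have hnorm : ‖(1 - p : ℝ)‖ < 1 := by
    rw [Real.norm_eq_abs, abs_of_nonneg (r_nonneg hp1)]; exact r_lt_one hp0
  have hs1 : Summable fun k : ℕ => (k : ℝ) * (1 - p) ^ k := by
    simpa using summable_pow_mul_geometric_of_norm_lt_one 1 hnorm
  have hs2 : Summable fun k : ℕ => (1 - p : ℝ) ^ k :=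
    summable_geometric_of_lt_one (r_nonneg hp1) (r_lt_one hp0)
  have : Summable fun k : ℕ => ((k : ℝ) * (1 - p) ^ k + (1 - p) ^ k) * (p * c) :=
    ((hs1.add hs2).mul_right _)
  apply this.congr
  intro k
  ring

/-- Key computation: tails of the geometric compound sum. -/
lemma tail_geomCompound_summable_tsum (hp0 : 0 < p) (hp1 : p ≤ 1) (hm : Good m)
    (hmass : ∑' t, m t = 1) (htm : Summable (tail m)) :
    Summable (tail (geomCompound p m)) ∧
      ∑' t, tail (geomCompound p m) t = (∑' t, tail m t) / p := by
  have hG0 : ∀ q : ℕ × ℕ, 0 ≤ p * (1 - p) ^ q.1 * tail (convPow m (q.1 + 1)) q.2 := fun q =>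
    mul_nonneg (mul_nonneg hp0.le (pow_nonneg (r_nonneg hp1) _))
      (tail_nonneg (cum_convPow_le_one hm.nonneg hm.cum_le_one _) _)
  have h1 : ∀ k, Summable fun t => p * (1 - p) ^ k * tail (convPow m (k + 1)) t := fun k =>
    (summable_tail_convPow hm.nonneg hm.cum_le_one htm (k+1)).mul_left _
  have hmarg : ∀ k : ℕ, (∑' t, p * (1 - p) ^ k * tail (convPow m (k + 1)) t)
      = p * (1 - p) ^ k * (((k : ℝ) + 1) * ∑' t, tail m t) := by
    intro k
    rw [tsum_mul_left, tsum_tail_convPow hm.nonneg hm.cum_le_one hmass htm (k+1)]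
    push_cast
    ring
  have h2 : Summable fun k : ℕ => ∑' t, p * (1 - p) ^ k * tail (convPow m (k + 1)) t :=
    ((summable_coeff_succ hp0 hp1 (∑' t, tail m t)).congr fun k => (hmarg k).symm)
  have hGs : Summable (fun q : ℕ × ℕ => p * (1 - p) ^ q.1 * tail (convPow m (q.1 + 1)) q.2) :=
    (summable_prod_of_nonneg hG0).2 ⟨h1, h2⟩
  have hslice : ∀ t, Summable fun k : ℕ => p * (1 - p) ^ k * tail (convPow m (k + 1)) t := by
    intro t
    refine summable_geom_coeff hp0 hp1
      (fun k => tail_nonneg (cum_convPow_le_one hm.nonneg hm.cum_le_one _) _)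
      (fun k => ?_)
    have h0 := cum_nonneg (convPow_nonneg hm.nonneg (k+1)) t
    rw [show tail (convPow m (k+1)) t = 1 - cum (convPow m (k+1)) t from rfl]
    linarith
  have hmargt : Summable fun t : ℕ =>
      ∑' k : ℕ, p * (1 - p) ^ k * tail (convPow m (k + 1)) t := by
    have hswap : Summable (fun q : ℕ × ℕ =>
        p * (1 - p) ^ q.2 * tail (convPow m (q.2 + 1)) q.1) := hGs.prod_symm
    exact ((summable_prod_of_nonneg (fun q => hG0 q.swap)).1 hswap).2
  have hpt : ∀ t, tail (geomCompound p m) t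
      = ∑' k : ℕ, p * (1 - p) ^ k * tail (convPow m (k + 1)) t := fun t =>
    tail_geomCompound hp0 hp1 hm t
  constructor
  · exact hmargt.congr fun t => (hpt t).symm
  · calc ∑' t, tail (geomCompound p m) t
        = ∑' (t) (k), p * (1 - p) ^ k * tail (convPow m (k + 1)) t := tsum_congr hpt
      _ = ∑' (k) (t), p * (1 - p) ^ k * tail (convPow m (k + 1)) t :=
          Summable.tsum_comm' hGs h1 hslice
      _ = ∑' k : ℕ, p * (1 - p) ^ k * (((k : ℝ) + 1) * ∑' t, tail m t) := tsum_congr hmarg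
      _ = (∑' t, tail m t) / p := by
          have heq : (fun k : ℕ => p * (1 - p) ^ k * (((k : ℝ) + 1) * ∑' t, tail m t))
              = fun k : ℕ => (p * (1 - p) ^ k * ((k : ℝ) + 1)) * ∑' t, tail m t := by
            funext k; ring
          rw [heq, tsum_mul_right, tsum_p_geom_succ hp0 hp1]
          ring

end PropAux
namespace PropAux

variable {pgen pswap : ℝ}

lemma up_facts (hg0 : 0 < pgen) (hg1 : pgen ≤ 1) (hs0 : 0 < pswap) (hs1 : pswap ≤ 1)
    (n : ℕ) :
    (∑' t, fUp pgen pswap n t = 1) ∧ Summable (tail (fUp pgen pswap n)) ∧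
      (∑' t, tail (fUp pgen pswap n) t = (2 / pswap) ^ n * (1 / pgen)) := by
  induction n with
  | zero =>
    have hgood := Good.geomPMF hg0 hg1
    have hr0 : (0:ℝ) ≤ 1 - pgen := by linarith
    have hr1 : (1:ℝ) - pgen < 1 := by linarith
    have htail : ∀ t, tail (fUp pgen pswap 0) t = (1 - pgen) ^ t := by
      intro t
      rw [show tail (fUp pgen pswap 0) t = 1 - cum (geomPMF pgen) t from rfl, cum_geomPMF]
      ring
    refine ⟨?_, ?_, ?_⟩
    · rw [show (fUp pgen pswap 0) = geomPMF pgen from rfl,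
        Summable.tsum_eq_zero_add (summable_of_cum_le_one hgood.nonneg hgood.cum_le_one)]
      have : ∀ b : ℕ, RepeaterChain.geomPMF pgen (b + 1) = pgen * (1 - pgen) ^ b := by
        intro b; simp [RepeaterChain.geomPMF]
      rw [hgood.zero, zero_add, tsum_congr this, tsum_mul_left,
        tsum_geometric_of_lt_one hr0 hr1]
      field_simp
      rw [sub_sub_cancel, div_self hg0.ne']
    · exact ((summable_geometric_of_lt_one hr0 hr1).congr fun t => (htail t).symm)
    · rw [tsum_congr htail, tsum_geometric_of_lt_one hr0 hr1]
      simp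
  | succ n ih =>
    obtain ⟨hmass, htsummable, htvalue⟩ := ih
    have hu := good_fUp hg0 hg1 hs0 hs1 n
    have hsu := summable_of_cum_le_one hu.nonneg hu.cum_le_one
    have hm : Good (conv (fUp pgen pswap n) (fUp pgen pswap n)) := hu.conv hu
    have hmmass : ∑' t, conv (fUp pgen pswap n) (fUp pgen pswap n) t = 1 := by
      rw [tsum_conv hu.nonneg hu.nonneg hsu hsu, hmass, one_mul]
    have hmtail : Summable (tail (conv (fUp pgen pswap n) (fUp pgen pswap n))) :=
      summable_tail_conv hu.nonneg hu.cum_le_one hu.cum_le_one htsummable htsummable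
    have hmtsum : ∑' t, tail (conv (fUp pgen pswap n) (fUp pgen pswap n)) t
        = 2 * ((2 / pswap) ^ n * (1 / pgen)) := by
      rw [tsum_tail_conv hu.nonneg hu.cum_le_one hu.cum_le_one htsummable htsummable,
        hmass, htvalue, one_mul]
      ring
    have hkey := tail_geomCompound_summable_tsum hs0 hs1 hm hmmass hmtail
    refine ⟨?_, hkey.1, ?_⟩
    · exact tsum_geomCompound_mass hs0 hs1 hm hmmass
    · have hx : ∑' t, tail (fUp pgen pswap (n+1)) t
          = (∑' t, tail (conv (fUp pgen pswap n) (fUp pgen pswap n)) t) / pswap := hkey.2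
      rw [hx, hmtsum]
      ring

end PropAux

open PropAux in
set_option maxHeartbeats 1000000 in
theorem mean_bounds_fSwap' (pgen pswap : ℝ)
    (hgen0 : 0 < pgen) (hgen1 : pgen ≤ 1) (hswap0 : 0 < pswap) (hswap1 : pswap ≤ 1)
    (n : ℕ) :
    Summable (fun t : ℕ => 1 - cum (fSwap pgen pswap n) t) ∧
    (∀ ttrunc : ℕ,
      0 ≤ (∑' t : ℕ, (1 - cum (fSwap pgen pswap n) t))
            - ∑ t ∈ Finset.range ttrunc, (1 - cum (fSwap pgen pswap n) t) ∧
      (∑' t : ℕ, (1 - cum (fSwap pgen pswap n) t))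
            - ∑ t ∈ Finset.range ttrunc, (1 - cum (fSwap pgen pswap n) t)
        ≤ (2 / pswap) ^ n * (1 / pgen)
            - ∑ t ∈ Finset.range ttrunc, (1 - cum (fUp pgen pswap n) t)) ∧
    Filter.Tendsto
      (fun ttrunc : ℕ =>
        (2 / pswap) ^ n * (1 / pgen)
          - ∑ t ∈ Finset.range ttrunc, (1 - cum (fUp pgen pswap n) t))
      Filter.atTop (nhds 0) := by
  obtain ⟨humass, hutail, hutsum⟩ := up_facts hgen0 hgen1 hswap0 hswap1 n
  have hw := good_fSwap hgen0 hgen1 hswap0 hswap1 n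
  have hu := good_fUp hgen0 hgen1 hswap0 hswap1 n
  have h0 : ∀ t, 0 ≤ 1 - cum (fSwap pgen pswap n) t := fun t =>
    sub_nonneg.2 (hw.cum_le_one t)
  have hle : ∀ t, 1 - cum (fSwap pgen pswap n) t ≤ 1 - cum (fUp pgen pswap n) t := by
    intro t
    have := cum_fUp_le_cum_fSwap hgen0 hgen1 hswap0 hswap1 n t
    linarith
  have hutail' : Summable (fun t : ℕ => 1 - cum (fUp pgen pswap n) t) := hutail
  have hstail : Summable (fun t : ℕ => 1 - cum (fSwap pgen pswap n) t) :=
    Summable.of_nonneg_of_le h0 hle hutail'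
  have hu0 : ∀ t, 0 ≤ 1 - cum (fUp pgen pswap n) t := fun t =>
    sub_nonneg.2 (hu.cum_le_one t)
  refine ⟨hstail, fun N => ⟨?_, ?_⟩, ?_⟩
  · exact sub_nonneg.2 (Summable.sum_le_tsum (Finset.range N) (fun i _ => h0 i) hstail)
  · have hdiff : Summable (fun t : ℕ =>
        (1 - cum (fUp pgen pswap n) t) - (1 - cum (fSwap pgen pswap n) t)) :=
      hutail'.sub hstail
    have hpart : ∑ t ∈ Finset.range N,
        ((1 - cum (fUp pgen pswap n) t) - (1 - cum (fSwap pgen pswap n) t))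
        ≤ ∑' t : ℕ, ((1 - cum (fUp pgen pswap n) t) - (1 - cum (fSwap pgen pswap n) t)) :=
      Summable.sum_le_tsum (Finset.range N) (fun i _ => sub_nonneg.2 (hle i)) hdiff
    have htd : ∑' t : ℕ, ((1 - cum (fUp pgen pswap n) t) - (1 - cum (fSwap pgen pswap n) t))
        = (∑' t : ℕ, (1 - cum (fUp pgen pswap n) t))
          - ∑' t : ℕ, (1 - cum (fSwap pgen pswap n) t) :=
      Summable.tsum_sub hutail' hstail
    have hsplit : ∑ t ∈ Finset.range N,
        ((1 - cum (fUp pgen pswap n) t) - (1 - cum (fSwap pgen pswap n) t))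
        = (∑ t ∈ Finset.range N, (1 - cum (fUp pgen pswap n) t))
          - ∑ t ∈ Finset.range N, (1 - cum (fSwap pgen pswap n) t) :=
      Finset.sum_sub_distrib _ _
    rw [htd, hsplit] at hpart
    have hEU : (∑' t : ℕ, (1 - cum (fUp pgen pswap n) t))
        = (2 / pswap) ^ n * (1 / pgen) := hutsum
    linarith
  · have htendsto : Filter.Tendsto
        (fun N : ℕ => ∑ t ∈ Finset.range N, (1 - cum (fUp pgen pswap n) t))
        Filter.atTop (nhds (∑' t : ℕ, (1 - cum (fUp pgen pswap n) t))) :=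
      hutail'.hasSum.tendsto_sum_nat
    have hutsum' : (∑' t : ℕ, (1 - cum (fUp pgen pswap n) t))
        = (2 / pswap) ^ n * (1 / pgen) := hutsum
    rw [hutsum'] at htendsto
    have := (tendsto_const_nhds (x := (2 / pswap) ^ n * (1 / pgen))
      (f := Filter.atTop (α := ℕ))).sub htendsto
    simpa using this


/-- Proposition 1: the waiting time `T_n` of the SWAP-ONLY protocol has finite mean
`E[f_n] = Σ_{t=1}^{∞} (1 − F_n(t−1))`, and for every truncation time `t_trunc` the difference
between the real mean and the empirical mean `Σ_{t=1}^{t_trunc} (1 − F_n(t−1))` is bounded as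
`0 ≤ E[f_n] − Σ_{t=1}^{t_trunc} (1 − F_n(t−1))
   ≤ (2/p_swap)^n·(1/p_gen) − Σ_{t=1}^{t_trunc} (1 − F_n^up(t−1))`,
and the two bounds coincide in the limit `t_trunc → ∞` (the upper bound tends to `0`).
(Sums over `t = 1, …, t_trunc` of `1 − F(t−1)` are written as sums over
`t ∈ Finset.range t_trunc` of `1 − F(t)`.) -/
theorem mean_bounds_fSwap (pgen pswap : ℝ)
    (hgen0 : 0 < pgen) (hgen1 : pgen ≤ 1) (hswap0 : 0 < pswap) (hswap1 : pswap ≤ 1)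
    (n : ℕ) :
    Summable (fun t : ℕ => 1 - cum (fSwap pgen pswap n) t) ∧
    (∀ ttrunc : ℕ,
      0 ≤ (∑' t : ℕ, (1 - cum (fSwap pgen pswap n) t))
            - ∑ t ∈ Finset.range ttrunc, (1 - cum (fSwap pgen pswap n) t) ∧
      (∑' t : ℕ, (1 - cum (fSwap pgen pswap n) t))
            - ∑ t ∈ Finset.range ttrunc, (1 - cum (fSwap pgen pswap n) t)
        ≤ (2 / pswap) ^ n * (1 / pgen)
            - ∑ t ∈ Finset.range ttrunc, (1 - cum (fUp pgen pswap n) t)) ∧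
    Filter.Tendsto
      (fun ttrunc : ℕ =>
        (2 / pswap) ^ n * (1 / pgen)
          - ∑ t ∈ Finset.range ttrunc, (1 - cum (fUp pgen pswap n) t))
      Filter.atTop (nhds 0) :=
  mean_bounds_fSwap' pgen pswap hgen0 hgen1 hswap0 hswap1 n
end
end

section
/- Fix p_gen, p_swap ∈ (0,1], and let (f_n) be the waiting-time distributions of the SWAP-ONLY protocol with cumulative sums F_n. Then for every n ≥ 0, the mean waiting time of the 2^n-segment SWAP-ONLY repeater chain satisfies E[f_n] = Σ_{t=1}^{∞} (1 − F_n(t−1)) ≤ (2/p_swap)^n · (1/p_gen). -/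
noncomputable section

namespace RCAux
open RepeaterChain ENNReal Finset

/-- Lift of a real function to `ℝ≥0∞`. -/
def L (f : ℕ → ℝ) : ℕ → ℝ≥0∞ := fun t => ENNReal.ofReal (f t)

def convE (A B : ℕ → ℝ≥0∞) : ℕ → ℝ≥0∞ := fun t => ∑ s ∈ Finset.range (t + 1), A s * B (t - s)

def convPowE (A : ℕ → ℝ≥0∞) : ℕ → ℕ → ℝ≥0∞
  | 0 => fun t => if t = 0 then 1 else 0
  | k + 1 => convE (convPowE A k) A

def meanE (A : ℕ → ℝ≥0∞) : ℝ≥0∞ := ∑' t : ℕ, (t : ℝ≥0∞) * A t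

lemma tsum_shift (A : ℕ → ℝ≥0∞) (s : ℕ) :
    ∑' t : ℕ, (if s ≤ t then A (t - s) else 0) = ∑' u : ℕ, A u := by
  have hinj : Function.Injective (fun u : ℕ => u + s) := fun a b h => by simpa using h
  have hsupp : Function.support (fun t : ℕ => if s ≤ t then A (t - s) else 0)
      ⊆ Set.range (fun u : ℕ => u + s) := by
    intro t ht
    by_cases h : s ≤ t
    · exact ⟨t - s, by simp [Nat.sub_add_cancel h]⟩
    · simp [h] at ht
  have h := hinj.tsum_eq (f := fun t : ℕ => if s ≤ t then A (t - s) else 0) hsupp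
  rw [← h]
  refine tsum_congr fun u => ?_
  simp

lemma conv_weight (w A B : ℕ → ℝ≥0∞) :
    ∑' t : ℕ, w t * convE A B t = ∑' s : ℕ, ∑' u : ℕ, w (s + u) * (A s * B u) := by
  have h1 : ∀ t : ℕ, w t * convE A B t
      = ∑' s : ℕ, (if s ≤ t then w t * (A s * B (t - s)) else 0) := by
    intro t
    rw [tsum_eq_sum (s := Finset.range (t + 1))
      (fun b hb => if_neg (by simp at hb; omega))]
    rw [convE, Finset.mul_sum]
    refine Finset.sum_congr rfl fun s hs => ?_
    have hs' := Finset.mem_range.mp hs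
    rw [if_pos (by omega)]
  calc ∑' t : ℕ, w t * convE A B t
      = ∑' t : ℕ, ∑' s : ℕ, (if s ≤ t then w t * (A s * B (t - s)) else 0) := tsum_congr h1
    _ = ∑' s : ℕ, ∑' t : ℕ, (if s ≤ t then w t * (A s * B (t - s)) else 0) := ENNReal.tsum_comm
    _ = ∑' s : ℕ, ∑' u : ℕ, w (s + u) * (A s * B u) := by
        refine tsum_congr fun s => ?_
        have := tsum_shift (fun u => w (s + u) * (A s * B u)) s
        rw [← this]
        refine tsum_congr fun t => ?_
        by_cases h : s ≤ t
        · simp only [if_pos h]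
          rw [Nat.add_sub_cancel' h]
        · simp [h]

lemma mass_convE (A B : ℕ → ℝ≥0∞) :
    ∑' t : ℕ, convE A B t = (∑' t : ℕ, A t) * (∑' t : ℕ, B t) := by
  have := conv_weight 1 A B
  simp only [Pi.one_apply, one_mul] at this
  rw [this]
  calc ∑' s : ℕ, ∑' u : ℕ, A s * B u = ∑' s : ℕ, A s * ∑' u : ℕ, B u :=
        tsum_congr fun s => ENNReal.tsum_mul_left
    _ = _ := ENNReal.tsum_mul_right

lemma meanE_convE (A B : ℕ → ℝ≥0∞) :
    meanE (convE A B) = meanE A * (∑' t : ℕ, B t) + (∑' t : ℕ, A t) * meanE B := by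
  have h := conv_weight (fun t => (t : ℝ≥0∞)) A B
  rw [meanE, h]
  have : ∀ s u : ℕ, ((s + u : ℕ) : ℝ≥0∞) * (A s * B u)
      = ((s : ℝ≥0∞) * A s) * B u + A s * ((u : ℝ≥0∞) * B u) := by
    intro s u; push_cast; ring
  calc ∑' s : ℕ, ∑' u : ℕ, ((s + u : ℕ) : ℝ≥0∞) * (A s * B u)
      = ∑' s : ℕ, ∑' u : ℕ, (((s : ℝ≥0∞) * A s) * B u + A s * ((u : ℝ≥0∞) * B u)) :=
        tsum_congr fun s => tsum_congr fun u => this s u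
    _ = ∑' s : ℕ, ((((s : ℝ≥0∞) * A s) * ∑' u : ℕ, B u) + A s * ∑' u : ℕ, (u : ℝ≥0∞) * B u) := by
        refine tsum_congr fun s => ?_
        rw [ENNReal.tsum_add, ENNReal.tsum_mul_left, ENNReal.tsum_mul_left]
    _ = meanE A * (∑' t : ℕ, B t) + (∑' t : ℕ, A t) * meanE B := by
        rw [ENNReal.tsum_add, ENNReal.tsum_mul_right, ENNReal.tsum_mul_right, meanE, meanE]

lemma convE_le (A B : ℕ → ℝ≥0∞) (t : ℕ) :
    convE A B t ≤ (∑' t : ℕ, A t) * (∑' t : ℕ, B t) := by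
  calc convE A B t ≤ ∑ s ∈ Finset.range (t + 1), A s * (∑' u : ℕ, B u) :=
        Finset.sum_le_sum fun s _ => mul_le_mul_right (ENNReal.le_tsum _) _
    _ = (∑ s ∈ Finset.range (t + 1), A s) * (∑' u : ℕ, B u) := by rw [Finset.sum_mul]
    _ ≤ (∑' t : ℕ, A t) * (∑' t : ℕ, B t) :=
        mul_le_mul_left (ENNReal.sum_le_tsum _) _


lemma mass_delta : ∑' t : ℕ, (if t = 0 then (1:ℝ≥0∞) else 0) = 1 := tsum_ite_eq 0 1

lemma meanE_delta : meanE (fun t => if t = 0 then (1:ℝ≥0∞) else 0) = 0 := by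
  rw [meanE]
  convert tsum_zero with t
  rcases t with _ | t <;> simp

lemma mass_convPowE {A : ℕ → ℝ≥0∞} (h : ∑' t : ℕ, A t = 1) (k : ℕ) :
    ∑' t : ℕ, convPowE A k t = 1 := by
  induction k with
  | zero => exact mass_delta
  | succ k ih => rw [convPowE, mass_convE, ih, h, one_mul]

lemma meanE_convPowE {A : ℕ → ℝ≥0∞} (h : ∑' t : ℕ, A t = 1) (k : ℕ) :
    meanE (convPowE A k) = (k : ℝ≥0∞) * meanE A := by
  induction k with
  | zero => rw [convPowE, meanE_delta]; simp
  | succ k ih =>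
      rw [convPowE, meanE_convE, ih, h, mass_convPowE h]
      push_cast
      ring

lemma convPowE_le_one {A : ℕ → ℝ≥0∞} (h : ∑' t : ℕ, A t = 1) (k : ℕ) (t : ℕ) :
    convPowE A k t ≤ 1 := by
  cases k with
  | zero => simp only [convPowE]; split <;> simp
  | succ k =>
      calc convPowE A (k+1) t ≤ (∑' t : ℕ, convPowE A k t) * (∑' t : ℕ, A t) :=
            convE_le _ _ t
        _ = 1 := by rw [mass_convPowE h, h, one_mul]

/-- `∑ (k+1) x^k = ((1-x)⁻¹)^2` in `ℝ≥0∞`. -/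
lemma tsum_succ_geometric (x : ℝ≥0∞) :
    ∑' k : ℕ, ((k : ℝ≥0∞) + 1) * x ^ k = ((1 - x)⁻¹) ^ 2 := by
  have hc : ∀ t : ℕ, convE (fun k => x ^ k) (fun k => x ^ k) t = ((t : ℝ≥0∞) + 1) * x ^ t := by
    intro t
    rw [convE]
    have : ∀ s ∈ Finset.range (t + 1), x ^ s * x ^ (t - s) = x ^ t := by
      intro s hs
      have hs' := Finset.mem_range.mp hs
      rw [← pow_add]
      congr 1
      omega
    rw [Finset.sum_congr rfl this, Finset.sum_const, Finset.card_range, nsmul_eq_mul]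
    push_cast
    ring
  have := mass_convE (fun k : ℕ => x ^ k) (fun k : ℕ => x ^ k)
  rw [tsum_congr hc, ENNReal.tsum_geometric] at this
  rw [this, sq]

/-- Lift of `conv`. -/
lemma L_conv {a b : ℕ → ℝ} (ha : ∀ t, 0 ≤ a t) (hb : ∀ t, 0 ≤ b t) :
    L (conv a b) = convE (L a) (L b) := by
  funext t
  rw [L, conv, ENNReal.ofReal_sum_of_nonneg
    (fun i _ => mul_nonneg (ha i) (hb _))]
  exact Finset.sum_congr rfl fun s _ => ENNReal.ofReal_mul (ha s)

lemma conv_nonneg' {a b : ℕ → ℝ} (ha : ∀ t, 0 ≤ a t) (hb : ∀ t, 0 ≤ b t) (t : ℕ) :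
    0 ≤ conv a b t :=
  Finset.sum_nonneg fun s _ => mul_nonneg (ha s) (hb _)

lemma convPow_nonneg {m : ℕ → ℝ} (hm : ∀ t, 0 ≤ m t) (k : ℕ) (t : ℕ) :
    0 ≤ convPow m k t := by
  induction k generalizing t with
  | zero => simp only [convPow]; split <;> norm_num
  | succ k ih => exact conv_nonneg' ih hm t

lemma L_convPow {m : ℕ → ℝ} (hm : ∀ t, 0 ≤ m t) (k : ℕ) :
    L (convPow m k) = convPowE (L m) k := by
  induction k with
  | zero =>
      funext t
      simp only [convPow, convPowE, L]
      split <;> simp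
  | succ k ih => rw [convPow, convPowE, L_conv (convPow_nonneg hm k) hm, ih]

lemma convPow_zero_of {m : ℕ → ℝ} (hm : m 0 = 0) (k : ℕ) : convPow m (k + 1) 0 = 0 := by
  simp [convPow, conv, hm]

lemma tsum_shift1 {G : ℕ → ℝ≥0∞} (h0 : G 0 = 0) : ∑' t : ℕ, G t = ∑' t : ℕ, G (t + 1) := by
  have hinj : Function.Injective (fun u : ℕ => u + 1) := fun a b h => by simpa using h
  have hsupp : Function.support G ⊆ Set.range (fun u : ℕ => u + 1) := by
    intro t ht
    cases t with
    | zero => exact absurd h0 ht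
    | succ t => exact ⟨t, rfl⟩
  exact (hinj.tsum_eq hsupp).symm

section Geom
variable {p : ℝ}

lemma one_sub_ofReal (hp1 : p ≤ 1) :
    (1:ℝ≥0∞) - ENNReal.ofReal (1 - p) = ENNReal.ofReal p := by
  have h : (1:ℝ) - (1 - p) = p := by ring
  rw [← ENNReal.ofReal_one, ← ENNReal.ofReal_sub 1 (by linarith : (0:ℝ) ≤ 1 - p), h]

lemma tsum_q_pow (hp1 : p ≤ 1) :
    ∑' k : ℕ, ENNReal.ofReal (1 - p) ^ k = (ENNReal.ofReal p)⁻¹ := by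
  rw [ENNReal.tsum_geometric, one_sub_ofReal hp1]

lemma P_mul_inv (hp0 : 0 < p) : ENNReal.ofReal p * (ENNReal.ofReal p)⁻¹ = 1 :=
  ENNReal.mul_inv_cancel (by simpa using hp0) ENNReal.ofReal_ne_top

lemma P_mul_inv_sq (hp0 : 0 < p) :
    ENNReal.ofReal p * ((ENNReal.ofReal p)⁻¹) ^ 2 = (ENNReal.ofReal p)⁻¹ := by
  rw [sq, ← mul_assoc, P_mul_inv hp0, one_mul]

lemma geomPMF_nonneg (hp0 : 0 ≤ p) (hp1 : p ≤ 1) (t : ℕ) : 0 ≤ geomPMF p t := by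
  rw [geomPMF]
  split
  · exact le_rfl
  · exact mul_nonneg hp0 (pow_nonneg (by linarith) _)

lemma L_geomPMF_succ (hp0 : 0 < p) (hp1 : p ≤ 1) (t : ℕ) :
    L (geomPMF p) (t + 1) = ENNReal.ofReal p * ENNReal.ofReal (1 - p) ^ t := by
  rw [L, geomPMF]
  simp only [Nat.succ_ne_zero, if_false, Nat.add_sub_cancel]
  rw [ENNReal.ofReal_mul hp0.le, ENNReal.ofReal_pow (by linarith : (0:ℝ) ≤ 1 - p)]

lemma mass_geom (hp0 : 0 < p) (hp1 : p ≤ 1) : ∑' t : ℕ, L (geomPMF p) t = 1 := by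
  rw [tsum_shift1 (by simp [L, geomPMF])]
  rw [tsum_congr (L_geomPMF_succ hp0 hp1), ENNReal.tsum_mul_left, tsum_q_pow hp1, P_mul_inv hp0]

lemma meanE_geom (hp0 : 0 < p) (hp1 : p ≤ 1) :
    meanE (L (geomPMF p)) = (ENNReal.ofReal p)⁻¹ := by
  rw [meanE, tsum_shift1 (by simp [L, geomPMF])]
  have h : ∀ t : ℕ, ((t + 1 : ℕ) : ℝ≥0∞) * L (geomPMF p) (t + 1)
      = ENNReal.ofReal p * (((t : ℝ≥0∞) + 1) * ENNReal.ofReal (1 - p) ^ t) := by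
    intro t
    rw [L_geomPMF_succ hp0 hp1]
    push_cast
    ring
  rw [tsum_congr h, ENNReal.tsum_mul_left, tsum_succ_geometric, one_sub_ofReal hp1,
    P_mul_inv_sq hp0]

end Geom

section Compound
variable {p : ℝ} {m : ℕ → ℝ}

lemma compound_sum_eq_one (hp0 : 0 < p) (hp1 : p ≤ 1) :
    ∑' k : ℕ, ENNReal.ofReal p * ENNReal.ofReal (1 - p) ^ k = 1 := by
  rw [ENNReal.tsum_mul_left, tsum_q_pow hp1, P_mul_inv hp0]

lemma geomCompound_term_nonneg (hp0 : 0 < p) (hp1 : p ≤ 1) (hm : ∀ t, 0 ≤ m t) (k t : ℕ) :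
    0 ≤ p * (1 - p) ^ k * convPow m (k + 1) t :=
  mul_nonneg (mul_nonneg hp0.le (pow_nonneg (by linarith) _)) (convPow_nonneg hm _ t)

lemma L_geomCompound (hp0 : 0 < p) (hp1 : p ≤ 1) (hm : ∀ t, 0 ≤ m t)
    (hmass : ∑' t : ℕ, L m t = 1) (t : ℕ) :
    L (geomCompound p m) t
      = ∑' k : ℕ, ENNReal.ofReal p * ENNReal.ofReal (1 - p) ^ k * convPowE (L m) (k + 1) t := by
  have hq : (0:ℝ) ≤ 1 - p := by linarith
  have hterm : ∀ k : ℕ, ENNReal.ofReal (p * (1 - p) ^ k * convPow m (k + 1) t)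
      = ENNReal.ofReal p * ENNReal.ofReal (1 - p) ^ k * convPowE (L m) (k + 1) t := by
    intro k
    rw [ENNReal.ofReal_mul (mul_nonneg hp0.le (pow_nonneg hq _)), ENNReal.ofReal_mul hp0.le,
      ENNReal.ofReal_pow hq, ← L_convPow hm]
    rfl
  have hle : ∑' k : ℕ, ENNReal.ofReal p * ENNReal.ofReal (1 - p) ^ k
      * convPowE (L m) (k + 1) t ≤ 1 := by
    calc ∑' k : ℕ, ENNReal.ofReal p * ENNReal.ofReal (1 - p) ^ k * convPowE (L m) (k + 1) t
        ≤ ∑' k : ℕ, ENNReal.ofReal p * ENNReal.ofReal (1 - p) ^ k := by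
          refine ENNReal.tsum_le_tsum fun k => ?_
          calc ENNReal.ofReal p * ENNReal.ofReal (1 - p) ^ k * convPowE (L m) (k + 1) t
              ≤ ENNReal.ofReal p * ENNReal.ofReal (1 - p) ^ k * 1 :=
                mul_le_mul_right (convPowE_le_one hmass _ t) _
            _ = _ := mul_one _
      _ = 1 := compound_sum_eq_one hp0 hp1
  have hfin' : ∑' k : ℕ, ENNReal.ofReal (p * (1 - p) ^ k * convPow m (k + 1) t) ≠ ⊤ := by
    rw [tsum_congr hterm]
    exact ne_top_of_le_ne_top one_ne_top hle
  have hsumm : Summable (fun k : ℕ => p * (1 - p) ^ k * convPow m (k + 1) t) :=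
    (ENNReal.summable_toReal hfin').congr fun k =>
      ENNReal.toReal_ofReal (geomCompound_term_nonneg hp0 hp1 hm k t)
  rw [L, geomCompound, ENNReal.ofReal_tsum_of_nonneg
    (fun k => geomCompound_term_nonneg hp0 hp1 hm k t) hsumm]
  exact tsum_congr hterm

lemma geomCompound_nonneg (hp0 : 0 < p) (hp1 : p ≤ 1) (hm : ∀ t, 0 ≤ m t) (t : ℕ) :
    0 ≤ geomCompound p m t :=
  tsum_nonneg fun k => geomCompound_term_nonneg hp0 hp1 hm k t

lemma geomCompound_zero (hm0 : m 0 = 0) : geomCompound p m 0 = 0 := by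
  rw [geomCompound]
  convert tsum_zero with k
  rw [convPow_zero_of hm0, mul_zero]

lemma mass_geomCompound (hp0 : 0 < p) (hp1 : p ≤ 1) (hm : ∀ t, 0 ≤ m t)
    (hmass : ∑' t : ℕ, L m t = 1) :
    ∑' t : ℕ, L (geomCompound p m) t = 1 := by
  rw [tsum_congr (L_geomCompound hp0 hp1 hm hmass)]
  rw [ENNReal.tsum_comm]
  calc ∑' k : ℕ, ∑' t : ℕ, ENNReal.ofReal p * ENNReal.ofReal (1 - p) ^ k
        * convPowE (L m) (k + 1) t
      = ∑' k : ℕ, ENNReal.ofReal p * ENNReal.ofReal (1 - p) ^ k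
        * ∑' t : ℕ, convPowE (L m) (k + 1) t := tsum_congr fun k => ENNReal.tsum_mul_left
    _ = ∑' k : ℕ, ENNReal.ofReal p * ENNReal.ofReal (1 - p) ^ k := by
        refine tsum_congr fun k => ?_
        rw [mass_convPowE hmass, mul_one]
    _ = 1 := compound_sum_eq_one hp0 hp1

lemma meanE_geomCompound (hp0 : 0 < p) (hp1 : p ≤ 1) (hm : ∀ t, 0 ≤ m t)
    (hmass : ∑' t : ℕ, L m t = 1) :
    meanE (L (geomCompound p m)) = (ENNReal.ofReal p)⁻¹ * meanE (L m) := by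
  rw [meanE, tsum_congr fun t => by
    rw [L_geomCompound hp0 hp1 hm hmass t, ENNReal.tsum_mul_left.symm]]
  rw [ENNReal.tsum_comm]
  calc ∑' k : ℕ, ∑' t : ℕ, (t : ℝ≥0∞) * (ENNReal.ofReal p * ENNReal.ofReal (1 - p) ^ k
        * convPowE (L m) (k + 1) t)
      = ∑' k : ℕ, ENNReal.ofReal p * ENNReal.ofReal (1 - p) ^ k
        * ∑' t : ℕ, (t : ℝ≥0∞) * convPowE (L m) (k + 1) t := by
        refine tsum_congr fun k => ?_
        rw [← ENNReal.tsum_mul_left]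
        exact tsum_congr fun t => by ring
    _ = ∑' k : ℕ, ENNReal.ofReal p * (((k : ℝ≥0∞) + 1) * ENNReal.ofReal (1 - p) ^ k)
        * meanE (L m) := by
        refine tsum_congr fun k => ?_
        rw [show ∑' t : ℕ, (t : ℝ≥0∞) * convPowE (L m) (k + 1) t
            = meanE (convPowE (L m) (k + 1)) from rfl, meanE_convPowE hmass]
        push_cast
        ring
    _ = ENNReal.ofReal p * (∑' k : ℕ, ((k : ℝ≥0∞) + 1) * ENNReal.ofReal (1 - p) ^ k)
        * meanE (L m) := by
        rw [ENNReal.tsum_mul_right, ENNReal.tsum_mul_left]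
    _ = (ENNReal.ofReal p)⁻¹ * meanE (L m) := by
        rw [tsum_succ_geometric, one_sub_ofReal hp1, P_mul_inv_sq hp0]

end Compound

section Mass
variable {f : ℕ → ℝ}

lemma real_of_mass (hf : ∀ t, 0 ≤ f t) (hmass : ∑' t : ℕ, L f t = 1) :
    Summable f ∧ ∑' t : ℕ, f t = 1 := by
  have hne : ∑' t : ℕ, L f t ≠ ⊤ := by rw [hmass]; exact one_ne_top
  constructor
  · exact (ENNReal.summable_toReal hne).congr fun t => ENNReal.toReal_ofReal (hf t)
  · have h2 := ENNReal.tsum_toReal_eq (f := L f) fun a => ENNReal.ofReal_ne_top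
    rw [hmass, ENNReal.toReal_one] at h2
    rw [h2]
    exact tsum_congr fun t => (ENNReal.toReal_ofReal (hf t)).symm

lemma cumE_eq (hf : ∀ t, 0 ≤ f t) (t : ℕ) :
    ∑ s ∈ Finset.range (t + 1), L f s = ENNReal.ofReal (cum f t) := by
  rw [cum, ENNReal.ofReal_sum_of_nonneg fun i _ => hf i]
  rfl

lemma cum_nonneg' (hf : ∀ t, 0 ≤ f t) (t : ℕ) : 0 ≤ cum f t :=
  Finset.sum_nonneg fun s _ => hf s

lemma cum_le_one (hf : ∀ t, 0 ≤ f t) (hmass : ∑' t : ℕ, L f t = 1) (t : ℕ) :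
    cum f t ≤ 1 := by
  have h := ENNReal.sum_le_tsum (f := L f) (Finset.range (t + 1))
  rw [hmass, cumE_eq hf] at h
  exact ENNReal.ofReal_le_one.mp h

lemma cum_succ (t : ℕ) : cum f (t + 1) = cum f t + f (t + 1) := Finset.sum_range_succ f (t + 1)

lemma maxPMF_nonneg (hf : ∀ t, 0 ≤ f t) (t : ℕ) : 0 ≤ maxPMF f t := by
  rcases t with _ | s
  · simp [maxPMF]
  · have h1 := cum_succ (f := f) s
    have h2 := hf (s + 1)
    have h3 := cum_nonneg' hf s
    simp only [maxPMF, Nat.succ_ne_zero, if_false, Nat.add_sub_cancel]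
    nlinarith

lemma maxPMF_le (hf : ∀ t, 0 ≤ f t) (hmass : ∑' t : ℕ, L f t = 1) (t : ℕ) :
    maxPMF f t ≤ 2 * f t := by
  rcases t with _ | s
  · simpa [maxPMF] using mul_nonneg (by norm_num : (0:ℝ) ≤ 2) (hf 0)
  · have h1 := cum_succ (f := f) s
    have h2 := hf (s + 1)
    have h3 := cum_nonneg' hf s
    have h4 := cum_le_one hf hmass (s + 1)
    simp only [maxPMF, Nat.succ_ne_zero, if_false, Nat.add_sub_cancel]
    nlinarith

lemma meanE_maxPMF_le (hf : ∀ t, 0 ≤ f t) (hmass : ∑' t : ℕ, L f t = 1) :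
    meanE (L (maxPMF f)) ≤ 2 * meanE (L f) := by
  rw [meanE, meanE, ← ENNReal.tsum_mul_left]
  refine ENNReal.tsum_le_tsum fun t => ?_
  calc (t : ℝ≥0∞) * L (maxPMF f) t ≤ (t : ℝ≥0∞) * (2 * L f t) := by
        refine mul_le_mul_right ?_ _
        rw [L, L]
        calc ENNReal.ofReal (maxPMF f t) ≤ ENNReal.ofReal (2 * f t) :=
              ENNReal.ofReal_le_ofReal (maxPMF_le hf hmass t)
          _ = 2 * ENNReal.ofReal (f t) := by
              rw [ENNReal.ofReal_mul (by norm_num : (0:ℝ) ≤ 2)]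
              norm_num
    _ = 2 * ((t : ℝ≥0∞) * L f t) := by ring

lemma cum_maxPMF (hf0 : f 0 = 0) (t : ℕ) : cum (maxPMF f) t = (cum f t) ^ 2 := by
  induction t with
  | zero => simp [cum, maxPMF, hf0]
  | succ t ih =>
      rw [cum_succ, ih]
      simp only [maxPMF, Nat.succ_ne_zero, if_false, Nat.add_sub_cancel]
      ring

lemma mass_maxPMF (hf : ∀ t, 0 ≤ f t) (hf0 : f 0 = 0) (hmass : ∑' t : ℕ, L f t = 1) :
    ∑' t : ℕ, L (maxPMF f) t = 1 := by
  obtain ⟨hsum, htsum⟩ := real_of_mass hf hmass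
  have hcum : Filter.Tendsto (cum f) Filter.atTop (nhds 1) := by
    have h1 := hsum.hasSum.tendsto_sum_nat
    rw [htsum] at h1
    exact (Filter.tendsto_add_atTop_iff_nat 1).mpr h1
  have hcum2 : Filter.Tendsto (fun t => cum (maxPMF f) t) Filter.atTop (nhds 1) := by
    have : Filter.Tendsto (fun t => (cum f t) ^ 2) Filter.atTop (nhds 1) := by
      have := hcum.pow 2
      norm_num at this
      exact this
    exact this.congr fun t => (cum_maxPMF hf0 t).symm
  have hsum2 : Summable (maxPMF f) := by
    refine summable_of_sum_range_le (c := 1) (maxPMF_nonneg hf) fun n => ?_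
    rcases n with _ | t
    · simp
    · have : ∑ i ∈ Finset.range (t + 1), maxPMF f i = cum (maxPMF f) t := rfl
      rw [this, cum_maxPMF hf0]
      have h1 := cum_le_one hf hmass t
      have h2 := cum_nonneg' hf t
      nlinarith
  have htsum2 : ∑' t : ℕ, maxPMF f t = 1 := by
    have h1 := hsum2.hasSum.tendsto_sum_nat
    have h2 : Filter.Tendsto (fun t => ∑ i ∈ Finset.range (t + 1), maxPMF f i)
        Filter.atTop (nhds (∑' t : ℕ, maxPMF f t)) :=
      (Filter.tendsto_add_atTop_iff_nat 1).mpr h1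
    exact tendsto_nhds_unique h2 hcum2
  show ∑' t : ℕ, ENNReal.ofReal (maxPMF f t) = 1
  rw [← ENNReal.ofReal_tsum_of_nonneg (maxPMF_nonneg hf) hsum2, htsum2, ENNReal.ofReal_one]

end Mass

section Tail

lemma tsum_tail_ite (A : ℕ → ℝ≥0∞) (t : ℕ) :
    ∑' s : ℕ, A (t + 1 + s) = ∑' u : ℕ, (if t + 1 ≤ u then A u else 0) := by
  have hinj : Function.Injective (fun s : ℕ => t + 1 + s) := fun a b h => by simpa using h
  have hsupp : Function.support (fun u : ℕ => if t + 1 ≤ u then A u else 0)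
      ⊆ Set.range (fun s : ℕ => t + 1 + s) := by
    intro u hu
    by_cases h : t + 1 ≤ u
    · exact ⟨u - (t + 1), by show t + 1 + (u - (t + 1)) = u; omega⟩
    · simp [h] at hu; exact absurd hu.1 (by omega)
  have h := hinj.tsum_eq (f := fun u : ℕ => if t + 1 ≤ u then A u else 0) hsupp
  rw [← h]
  exact tsum_congr fun s => by simp

lemma tsum_tail_eq_meanE (A : ℕ → ℝ≥0∞) :
    ∑' t : ℕ, ∑' s : ℕ, A (t + 1 + s) = meanE A := by
  rw [tsum_congr (tsum_tail_ite A), ENNReal.tsum_comm]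
  refine tsum_congr fun u => ?_
  rw [tsum_eq_sum (s := Finset.range u) (fun t ht => if_neg (by simp at ht; omega))]
  have : ∀ t ∈ Finset.range u, (if t + 1 ≤ u then A u else 0) = A u := by
    intro t ht
    rw [if_pos (by simpa [Nat.succ_le_iff] using Finset.mem_range.mp ht)]
  rw [Finset.sum_congr rfl this, Finset.sum_const, Finset.card_range, nsmul_eq_mul]

lemma tail_add_cum (A : ℕ → ℝ≥0∞) (t : ℕ) :
    (∑' s : ℕ, A (t + 1 + s)) + ∑ s ∈ Finset.range (t + 1), A s = ∑' u : ℕ, A u := by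
  have h1 : ∑ s ∈ Finset.range (t + 1), A s
      = ∑' u : ℕ, (if u ≤ t then A u else 0) := by
    rw [tsum_eq_sum (s := Finset.range (t + 1)) (fun b hb => if_neg (by simp at hb; omega))]
    exact (Finset.sum_congr rfl fun b hb =>
      if_pos (by simpa [Nat.lt_succ_iff] using Finset.mem_range.mp hb)).symm
  rw [h1, tsum_tail_ite A t, ← ENNReal.tsum_add]
  refine tsum_congr fun u => ?_
  by_cases h : t + 1 ≤ u
  · rw [if_pos h, if_neg (by omega), add_zero]
  · rw [if_neg h, if_pos (by omega), zero_add]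

end Tail

section Main
variable {pgen pswap : ℝ}

lemma fSwap_invariant (hgen0 : 0 < pgen) (hgen1 : pgen ≤ 1) (hswap0 : 0 < pswap)
    (hswap1 : pswap ≤ 1) (n : ℕ) :
    (∀ t, 0 ≤ fSwap pgen pswap n t) ∧ fSwap pgen pswap n 0 = 0 ∧
    (∑' t : ℕ, L (fSwap pgen pswap n) t = 1) ∧
    meanE (L (fSwap pgen pswap n))
      ≤ (2 * (ENNReal.ofReal pswap)⁻¹) ^ n * (ENNReal.ofReal pgen)⁻¹ := by
  induction n with
  | zero =>
      refine ⟨geomPMF_nonneg hgen0.le hgen1, by show geomPMF pgen 0 = 0; rfl, mass_geom hgen0 hgen1, ?_⟩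
      rw [show fSwap pgen pswap 0 = geomPMF pgen from rfl, meanE_geom hgen0 hgen1]
      simp
  | succ n ih =>
      obtain ⟨hnn, h0, hmass, hmean⟩ := ih
      set f := fSwap pgen pswap n with hfdef
      have hmp_nonneg := maxPMF_nonneg hnn
      have hmp0 : maxPMF f 0 = 0 := by simp [maxPMF]
      have hmp_mass := mass_maxPMF hnn h0 hmass
      have heq : fSwap pgen pswap (n + 1) = geomCompound pswap (maxPMF f) := rfl
      refine ⟨?_, ?_, ?_, ?_⟩
      · intro t; rw [heq]; exact geomCompound_nonneg hswap0 hswap1 hmp_nonneg t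
      · rw [heq]; exact geomCompound_zero hmp0
      · rw [heq]; exact mass_geomCompound hswap0 hswap1 hmp_nonneg hmp_mass
      · rw [heq, meanE_geomCompound hswap0 hswap1 hmp_nonneg hmp_mass]
        calc (ENNReal.ofReal pswap)⁻¹ * meanE (L (maxPMF f))
            ≤ (ENNReal.ofReal pswap)⁻¹ * (2 * meanE (L f)) :=
              mul_le_mul_right (meanE_maxPMF_le hnn hmass) _
          _ = (2 * (ENNReal.ofReal pswap)⁻¹) * meanE (L f) := by ring
          _ ≤ (2 * (ENNReal.ofReal pswap)⁻¹)
              * ((2 * (ENNReal.ofReal pswap)⁻¹) ^ n * (ENNReal.ofReal pgen)⁻¹) :=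
              mul_le_mul_right hmean _
          _ = (2 * (ENNReal.ofReal pswap)⁻¹) ^ (n + 1) * (ENNReal.ofReal pgen)⁻¹ := by ring

lemma bound_ofReal (hgen0 : 0 < pgen) (hswap0 : 0 < pswap) (n : ℕ) :
    ENNReal.ofReal ((2 / pswap) ^ n * (1 / pgen))
      = (2 * (ENNReal.ofReal pswap)⁻¹) ^ n * (ENNReal.ofReal pgen)⁻¹ := by
  rw [ENNReal.ofReal_mul (by positivity), ENNReal.ofReal_pow (by positivity)]
  congr 1
  · congr 1
    rw [ENNReal.ofReal_div_of_pos hswap0, div_eq_mul_inv]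
    norm_num
  · rw [ENNReal.ofReal_div_of_pos hgen0, ENNReal.ofReal_one, one_div]

theorem main_result (hgen0 : 0 < pgen) (hgen1 : pgen ≤ 1) (hswap0 : 0 < pswap)
    (hswap1 : pswap ≤ 1) (n : ℕ) :
    Summable (fun t : ℕ => 1 - cum (fSwap pgen pswap n) t) ∧
    ∑' t : ℕ, (1 - cum (fSwap pgen pswap n) t) ≤ (2 / pswap) ^ n * (1 / pgen) := by
  obtain ⟨hnn, h0, hmass, hmean⟩ := fSwap_invariant hgen0 hgen1 hswap0 hswap1 n
  set f := fSwap pgen pswap n with hfdef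
  have htc : ∀ t : ℕ, (∑' s : ℕ, L f (t + 1 + s)) = 1 - ENNReal.ofReal (cum f t) := by
    intro t
    refine ENNReal.eq_sub_of_add_eq ENNReal.ofReal_ne_top ?_
    rw [← cumE_eq hnn t, tail_add_cum (L f) t, hmass]
  have hsurv : ∀ t : ℕ, (1 : ℝ) - cum f t = (∑' s : ℕ, L f (t + 1 + s)).toReal := by
    intro t
    rw [htc t, ENNReal.toReal_sub_of_le (ENNReal.ofReal_le_one.mpr (cum_le_one hnn hmass t))
      ENNReal.one_ne_top, ENNReal.toReal_one, ENNReal.toReal_ofReal (cum_nonneg' hnn t)]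
  have hfun : (fun t : ℕ => 1 - cum f t) = fun t : ℕ => (∑' s : ℕ, L f (t + 1 + s)).toReal :=
    funext hsurv
  have htailsum : ∑' t : ℕ, ∑' s : ℕ, L f (t + 1 + s) = meanE (L f) := tsum_tail_eq_meanE (L f)
  have hboundfin : (2 * (ENNReal.ofReal pswap)⁻¹) ^ n * (ENNReal.ofReal pgen)⁻¹ ≠ ⊤ := by
    rw [← bound_ofReal hgen0 hswap0]
    exact ENNReal.ofReal_ne_top
  have hmeanfin : meanE (L f) ≠ ⊤ := ne_top_of_le_ne_top hboundfin hmean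
  constructor
  · rw [hfun]
    exact ENNReal.summable_toReal (htailsum ▸ hmeanfin)
  · rw [hfun]
    have htailne : ∀ t : ℕ, (∑' s : ℕ, L f (t + 1 + s)) ≠ ⊤ := by
      intro t
      rw [htc t]
      exact ne_top_of_le_ne_top ENNReal.one_ne_top tsub_le_self
    calc ∑' t : ℕ, (∑' s : ℕ, L f (t + 1 + s)).toReal
        = (∑' t : ℕ, ∑' s : ℕ, L f (t + 1 + s)).toReal :=
          (ENNReal.tsum_toReal_eq htailne).symm
      _ = (meanE (L f)).toReal := by rw [htailsum]
      _ ≤ (2 / pswap) ^ n * (1 / pgen) := by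
          refine ENNReal.toReal_le_of_le_ofReal (by positivity) ?_
          rw [bound_ofReal hgen0 hswap0]
          exact hmean

end Main

end RCAux

open RepeaterChain

/-- The mean waiting time of the `2^n`-segment SWAP-ONLY repeater chain is finite and satisfies
`E[f_n] = Σ_{t=1}^{∞} (1 − F_n(t−1)) ≤ (2/p_swap)^n · (1/p_gen)`. -/
theorem mean_fSwap_le (pgen pswap : ℝ)
    (hgen0 : 0 < pgen) (hgen1 : pgen ≤ 1) (hswap0 : 0 < pswap) (hswap1 : pswap ≤ 1)
    (n : ℕ) :
    Summable (fun t : ℕ => 1 - cum (fSwap pgen pswap n) t) ∧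
    ∑' t : ℕ, (1 - cum (fSwap pgen pswap n) t) ≤ (2 / pswap) ^ n * (1 / pgen) := by
  exact RCAux.main_result hgen0 hgen1 hswap0 hswap1 n
end
end
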